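/- arXiv:1404.0147 — 3 statements merged into one kernel-verified Lean document; each statement's English description precedes it below -/
import Mathlib

section
/- Suppose f₀ is partially captive. Then for any δ > 0 there exists n_δ ∈ ℕ such that for every n ≥ n_δ one can find ε(n) > 0 such that esssup_ω |log N(ε;ω,n)/n| < δ for all 0 ≤ ε < ε(n). -/
open MeasureTheory Filter Topology
open scoped ENNReal

noncomputable section

namespace RPE

variable {Ω : Type*}

/-! ## The circle and the torus -/

/-- The circle `S¹ = ℝ/ℤ`. -/
abbrev S1 := AddCircle (1 : ℝ)

/-- The torus `𝕋² = S¹ × S¹`. -/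
abbrev T2 := S1 × S1

instance : Fact ((0:ℝ) < 1) := ⟨one_pos⟩

/-- The representative in `[0,1)` of a point of the circle. -/
def lift01 (x : S1) : ℝ := (AddCircle.equivIco 1 0 x).1

/-- The circle map induced by a lift `F : ℝ → ℝ`. -/
def circMap (F : ℝ → ℝ) (x : S1) : S1 := (F (lift01 x) : ℝ)

/-- The skew product `f(x,s) = (E x mod 1, s + τ(x)/(2π) mod 1)` defined through lifts. -/
def skewMap (E τ : ℝ → ℝ) (z : T2) : T2 :=
  ((E (lift01 z.1) : ℝ), z.2 + ((τ (lift01 z.1) / (2 * Real.pi) : ℝ) : S1))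

/-- The fiber iterates `f^{(n)}(ω) = f(θ^{n-1}ω) ∘ ⋯ ∘ f(ω)` of the random skew product. -/
def iterSkew (θ : Ω → Ω) (E τ : Ω → ℝ → ℝ) : ℕ → Ω → T2 → T2
  | 0, _, z => z
  | n + 1, ω, z => iterSkew θ E τ n (θ ω) (skewMap (E ω) (τ ω) z)

/-- `C^∞` functions on the torus, via doubly periodic smooth lifts. -/
def SmoothT2 (φ : T2 → ℂ) : Prop :=
  ∃ Φ : ℝ × ℝ → ℂ, ContDiff ℝ (⊤ : ℕ∞) Φ ∧
    (∀ x s : ℝ, Φ (x + 1, s) = Φ (x, s) ∧ Φ (x, s + 1) = Φ (x, s)) ∧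
    ∀ x s : ℝ, φ ((x : S1), (s : S1)) = Φ (x, s)

/-! ## Cocycles and transfer operators (on lifts) -/

/-- Forward cocycle of (lifted) expanding maps: `E^{(n)}(ω) = E(θ^{n-1}ω) ∘ ⋯ ∘ E(ω)`. -/
def iterE (θ : Ω → Ω) (E : Ω → ℝ → ℝ) : ℕ → Ω → ℝ → ℝ
  | 0, _, x => x
  | n + 1, ω, x => iterE θ E n (θ ω) (E ω x)

/-- Birkhoff-type sum `τ^{(n)}(ω,x) = ∑_{j<n} τ(θ^jω, E^{(j)}(ω,x))`. -/
def iterTau (θ : Ω → Ω) (E τ : Ω → ℝ → ℝ) (n : ℕ) (ω : Ω) (x : ℝ) : ℝ :=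
  ∑ j ∈ Finset.range n, τ (θ^[j] ω) (iterE θ E j ω x)

/-- The composition (Koopman) operator `M_{ν,n}(ω)φ = e^{iν τ^{(n)}(ω,·)} φ ∘ E^{(n)}(ω)`. -/
def transferM (θ : Ω → Ω) (E τ : Ω → ℝ → ℝ) (ν : ℤ) (n : ℕ) (ω : Ω) (φ : ℝ → ℂ) (x : ℝ) : ℂ :=
  Complex.exp (Complex.I * ν * (iterTau θ E τ n ω x)) * φ (iterE θ E n ω x)

/-- The reduced Perron–Frobenius transfer operator
`M*_{ν,n}(ω)φ(x) = ∑_{E^{(n)}(ω,y)=x} e^{-iν τ^{(n)}(ω,y)} φ(y)/(dE^{(n)}(ω,y)/dy)`,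
realized on lifts: the preimages of `x` are `(E^{(n)}(ω))^{-1}(x+a)`, `a = 0,…,kⁿ-1`. -/
def transferStar (k : ℕ) (θ : Ω → Ω) (E τ : Ω → ℝ → ℝ) (ν : ℤ) (n : ℕ) (ω : Ω)
    (φ : ℝ → ℂ) (x : ℝ) : ℂ :=
  ∑ a ∈ Finset.range (k ^ n),
    Complex.exp (-(Complex.I * ν * iterTau θ E τ n ω (Function.invFun (iterE θ E n ω) (x + a))))
      * φ (Function.invFun (iterE θ E n ω) (x + a))
      / Complex.ofReal (deriv (iterE θ E n ω) (Function.invFun (iterE θ E n ω) (x + a)))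

/-! ## Sobolev norms via Fourier coefficients -/

/-- Fourier coefficient of a 1-periodic function, at frequency `ξ = 2πn`. -/
def fourierC (u : ℝ → ℂ) (n : ℤ) : ℂ :=
  ∫ x in (0:ℝ)..1, u x * Complex.exp (-(2 * Real.pi * n * x) * Complex.I)

/-- Squared Sobolev norm `‖u‖²_{(m)} = ∑_{ξ∈2πℤ} (1+|ξ|²)^m |û(ξ)|²`. -/
def sobNormSq (m : ℕ) (u : ℝ → ℂ) : ℝ :=
  ∑' n : ℤ, (1 + (2 * Real.pi * n) ^ 2) ^ m * ‖fourierC u n‖ ^ 2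

/-- Squared `ν`-dependent Sobolev norm `‖u‖²_{H^m_ν} = ∑_{ξ∈2πℤ} |⟨ξ/ν⟩^m û(ξ)|²`. -/
def sobNuNormSq (m : ℕ) (ν : ℤ) (u : ℝ → ℂ) : ℝ :=
  ∑' n : ℤ, (1 + (2 * Real.pi * n / ν) ^ 2) ^ m * ‖fourierC u n‖ ^ 2

/-- Smooth functions on the circle, viewed as smooth 1-periodic functions on `ℝ`. -/
def SmoothPeriodic (u : ℝ → ℂ) : Prop :=
  ContDiff ℝ (⊤ : ℕ∞) u ∧ Function.Periodic u 1

/-- Membership in `H^m(S¹)`, via summability of the Sobolev series. -/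
def sobInH (m : ℕ) (u : ℝ → ℂ) : Prop :=
  Summable fun n : ℤ => (1 + (2 * Real.pi * n) ^ 2) ^ m * ‖fourierC u n‖ ^ 2

/-- Operator norm on `H^m(S¹)` (computed over the dense subspace of smooth functions). -/
def opNormH (m : ℕ) (T : (ℝ → ℂ) → ℝ → ℂ) : ℝ :=
  ⨆ φ : {φ : ℝ → ℂ // SmoothPeriodic φ ∧ sobNormSq m φ ≤ 1}, Real.sqrt (sobNormSq m (T φ.1))

/-- Index of compactness (ball measure of noncompactness) of an operator on `H^m(S¹)`. -/
def icNormH (m : ℕ) (T : (ℝ → ℂ) → ℝ → ℂ) : ℝ :=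
  sInf {r : ℝ | 0 < r ∧ ∃ s : Finset (ℝ → ℂ), ∀ φ : ℝ → ℂ, SmoothPeriodic φ → sobNormSq m φ ≤ 1 →
    ∃ v ∈ s, Real.sqrt (sobNormSq m fun x => T φ x - v x) ≤ r}

/-! ## Canonical maps on the cotangent bundle and trajectory counts -/

/-- The canonical map `F_j : (y,η) ↦ (x_j, E'(x_j)η + τ'(x_j))`, where
`x_j = g^{-1}((y+j)/k) = E^{-1}(y+j)` on lifts. -/
def canMap (E τ : ℝ → ℝ) (j : ℕ) (p : ℝ × ℝ) : ℝ × ℝ :=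
  (Function.invFun E (p.1 + j),
    deriv E (Function.invFun E (p.1 + j)) * p.2 + deriv τ (Function.invFun E (p.1 + j)))

/-- Random trajectory branch `F_α^{(n)}(ω) = F_{α_n}(ω) ∘ F_{α_{n-1}}(θω) ∘ ⋯ ∘ F_{α_1}(θ^{n-1}ω)`. -/
def canTraj (θ : Ω → Ω) (E τ : Ω → ℝ → ℝ) : (n : ℕ) → (Fin n → ℕ) → Ω → ℝ × ℝ → ℝ × ℝ
  | 0, _, _, p => p
  | n + 1, α, ω, p =>
      canMap (E ω) (τ ω) (α (Fin.last n)) (canTraj θ E τ n (fun i => α i.castSucc) (θ ω) p)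

/-- Number of branches issued from `p` which lie in `Z = S¹ × [-R,R]` at time `n`. -/
def trajCount (k : ℕ) (θ : Ω → Ω) (E τ : Ω → ℝ → ℝ) (R : ℝ) (n : ℕ) (ω : Ω) (p : ℝ × ℝ) : ℕ :=
  Nat.card {α : Fin n → Fin k // |(canTraj θ E τ n (fun i => (α i : ℕ)) ω p).2| ≤ R}

/-- `N(ε;ω,n)`: the maximal number of non-escaping branches over starting points in `Z`. -/
def Ncount (k : ℕ) (θ : Ω → Ω) (E τ : Ω → ℝ → ℝ) (R : ℝ) (n : ℕ) (ω : Ω) : ℕ :=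
  sSup {c : ℕ | ∃ p : ℝ × ℝ, |p.2| ≤ R ∧ trajCount k θ E τ R n ω p = c}

/-- Deterministic (unperturbed) non-escaping branch count `N(0;n)`. -/
def NcountD (k : ℕ) (E₀ τ₀ : ℝ → ℝ) (R : ℝ) (n : ℕ) : ℕ :=
  Ncount k (id : Unit → Unit) (fun _ => E₀) (fun _ => τ₀) R n ()

/-- Partial captivity of the unperturbed map: `lim (1/n) log N(0;n) = 0`. -/
def PartiallyCaptive (k : ℕ) (E₀ τ₀ : ℝ → ℝ) (R : ℝ) : Prop :=
  Tendsto (fun n : ℕ => Real.log (NcountD k E₀ τ₀ R n) / n) atTop (nhds 0)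

/-! ## Lifted dynamics, the invariant section `S`, and the trapped counts `Ñ` -/

/-- Backward cocycle `G^{(n)}(ω) = G(ω) ∘ G(θω) ∘ ⋯ ∘ G(θ^{n-1}ω)`, `G(ω) = E(ω)^{-1}`. -/
def iterG (θ : Ω → Ω) (E : Ω → ℝ → ℝ) : ℕ → Ω → ℝ → ℝ
  | 0, _, x => x
  | n + 1, ω, x => Function.invFun (E ω) (iterG θ E n (θ ω) x)

/-- The lifted dynamics `F̃(ε;ω) : (y,η) ↦ (x, E'(ω,x)η + τ'(ω,x))` with `x = E(ω)^{-1}(y)`. -/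
def liftF (E τ : ℝ → ℝ) (p : ℝ × ℝ) : ℝ × ℝ :=
  (Function.invFun E p.1,
    deriv E (Function.invFun E p.1) * p.2 + deriv τ (Function.invFun E p.1))

/-- Backward cocycle `F̃^{(n)}(ε;ω) = F̃(ε;ω) ∘ F̃(ε;θω) ∘ ⋯ ∘ F̃(ε;θ^{n-1}ω)`. -/
def iterLiftF (θ : Ω → Ω) (E τ : Ω → ℝ → ℝ) : ℕ → Ω → ℝ × ℝ → ℝ × ℝ
  | 0, _, p => p
  | n + 1, ω, p => liftF (E ω) (τ ω) (iterLiftF θ E τ n (θ ω) p)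

/-- `S_ε(ω,x) = -∑_{j≥1} τ'(θ^{-j}ω, G^{(j)}(θ^{-j}ω,x)) ⋅ dG^{(j)}(θ^{-j}ω,x)/dx`. -/
def stableS (θ θinv : Ω → Ω) (E τ : Ω → ℝ → ℝ) (ω : Ω) (x : ℝ) : ℝ :=
  -∑' j : ℕ,
    deriv (τ (θinv^[j + 1] ω)) (iterG θ E (j + 1) (θinv^[j + 1] ω) x)
      * deriv (fun y => iterG θ E (j + 1) (θinv^[j + 1] ω) y) x

/-- Cardinality of `Ã_R(ε;ω,n)(y,η)`. -/
def tilACard (k : ℕ) (θ θinv : Ω → Ω) (E τ : Ω → ℝ → ℝ) (R : ℝ) (n : ℕ) (ω : Ω)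
    (p : ℝ × ℝ) : ℕ :=
  Nat.card {a : Fin (k ^ n) //
    |p.2 - stableS θ θinv E τ (θ^[n] ω) (p.1 + ((a : ℕ) : ℝ))|
      ≤ R * deriv (fun y => iterG θ E n ω y) (p.1 + ((a : ℕ) : ℝ))}

/-- `Ñ_R(ε;ω,n) = sup_{(y,η)∈ℝ²} #Ã_R(ε;ω,n)(y,η)`. -/
def tilN (k : ℕ) (θ θinv : Ω → Ω) (E τ : Ω → ℝ → ℝ) (R : ℝ) (n : ℕ) (ω : Ω) : ℕ :=
  sSup {c : ℕ | ∃ p : ℝ × ℝ, tilACard k θ θinv E τ R n ω p = c}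

/-- Deterministic (unperturbed) version `Ñ_R(0;n)`. -/
def tilND (k : ℕ) (E₀ τ₀ : ℝ → ℝ) (R : ℝ) (n : ℕ) : ℕ :=
  tilN k (id : Unit → Unit) id (fun _ => E₀) (fun _ => τ₀) R n ()

/-! ## Correlation functions -/

/-- Quenched operational correlation function
`Cor^{op}_{φ,ψ}(ω,n) = ∫ φ∘f^{(n)}(ω)·ψ̄ dxds - ∫ φ dμ_{θⁿω} ∫ ψ̄ dxds`,
where `dμ_ω = h(ω,x) dxds`. -/
def corOp (θ : Ω → Ω) (E τ : Ω → ℝ → ℝ) (h : Ω → ℝ → ℝ) (φ ψ : T2 → ℂ) (ω : Ω) (n : ℕ) : ℂ :=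
  (∫ z : T2, φ (iterSkew θ E τ n ω z) * starRingEnd ℂ (ψ z))
    - (∫ z : T2, φ z * (h (θ^[n] ω) (lift01 z.1) : ℂ)) * ∫ z : T2, starRingEnd ℂ (ψ z)

/-- Quenched classical correlation function
`Cor^{cl}_{φ,ψ}(ω,n) = ∫ φ∘f^{(n)}(ω)·ψ̄ dμ_ω - ∫ φ dμ_{θⁿω} ∫ ψ̄ dμ_ω`. -/
def corCl (θ : Ω → Ω) (E τ : Ω → ℝ → ℝ) (h : Ω → ℝ → ℝ) (φ ψ : T2 → ℂ) (ω : Ω) (n : ℕ) : ℂ :=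
  (∫ z : T2, φ (iterSkew θ E τ n ω z) * starRingEnd ℂ (ψ z) * (h ω (lift01 z.1) : ℂ))
    - (∫ z : T2, φ z * (h (θ^[n] ω) (lift01 z.1) : ℂ))
      * ∫ z : T2, starRingEnd ℂ (ψ z) * (h ω (lift01 z.1) : ℂ)

/-! ## Semiclassical pseudodifferential calculus on `S¹` -/

/-- Semiclassical (toroidal) quantization of a symbol. -/
def quantize (h : ℝ) (a : ℝ → ℝ → ℂ) (u : ℝ → ℂ) (x : ℝ) : ℂ :=
  ∑' n : ℤ, a x (h * (2 * Real.pi * n)) * fourierC u n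
    * Complex.exp ((2 * Real.pi * n * x) * Complex.I)

/-- Fourier multiplier with (real) weight `w`, semiclassical parameter `h`. -/
def multiplierOp (w : ℝ → ℝ) (h : ℝ) (u : ℝ → ℂ) (x : ℝ) : ℂ :=
  ∑' n : ℤ, (w (h * (2 * Real.pi * n)) : ℂ) * fourierC u n
    * Complex.exp ((2 * Real.pi * n * x) * Complex.I)

/-- Mixed derivative `∂_ξ^α D_x^β a` (up to a unimodular factor) of a symbol. -/
def symDeriv (a : ℝ → ℝ → ℂ) (α β : ℕ) (x ξ : ℝ) : ℂ :=
  iteratedDeriv α (fun ξ' => iteratedDeriv β (fun x' => a x' ξ') x) ξ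

/-- The symbol class `S^m(T^*(S¹))`: smooth, 1-periodic in `x`, with symbol estimates. -/
def IsSymbol (m : ℝ) (a : ℝ → ℝ → ℂ) : Prop :=
  ContDiff ℝ (⊤ : ℕ∞) (fun p : ℝ × ℝ => a p.1 p.2) ∧
  (∀ x ξ : ℝ, a (x + 1) ξ = a x ξ) ∧
  ∀ α β : ℕ, ∃ C : ℝ, ∀ x ξ : ℝ, ‖symDeriv a α β x ξ‖ ≤ C * (1 + |ξ|) ^ (m - (α : ℝ))

/-- Condition (𝒜(m)) for a family of symbols depending on `(ε, ω, n, h)`: for every `ℓ`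
there are `ε₀ > 0` (independent of `n`) and constants `C n` such that the `ℓ`-th symbol
semi-norms are a.s. bounded by `C n`, uniformly in `ε ∈ [0,ε₀)` and `0 < h ≤ 1`. -/
def CondA [MeasurableSpace Ω] (P : Measure Ω) (m : ℝ)
    (a : ℝ → Ω → ℕ → ℝ → ℝ → ℝ → ℂ) : Prop :=
  ∀ ℓ : ℕ, ∃ ε₀ : ℝ, 0 < ε₀ ∧ ∃ C : ℕ → ℝ,
    ∀ ε : ℝ, 0 ≤ ε → ε < ε₀ → ∀ n : ℕ, ∀ h : ℝ, 0 < h → h ≤ 1 →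
      ∀ᵐ ω ∂P, ∀ α β : ℕ, α + β ≤ ℓ →
        ∀ x ξ : ℝ, ‖symDeriv (a ε ω n h) α β x ξ‖ ≤ C n * (1 + |ξ|) ^ (m - (α : ℝ))

/-- Sup norm of a (complex) symbol over `T^*(S¹)`. -/
def supSym (a : ℝ → ℝ → ℂ) : ℝ := ⨆ x : ℝ, ⨆ ξ : ℝ, ‖a x ξ‖

/-- Sup norm of a real symbol over `T^*(S¹)`. -/
def supSymR (a : ℝ → ℝ → ℝ) : ℝ := ⨆ x : ℝ, ⨆ ξ : ℝ, |a x ξ|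

/-- Squared `L²(S¹)` norm. -/
def l2NormSq (u : ℝ → ℂ) : ℝ := ∫ x in (0:ℝ)..1, ‖u x‖ ^ 2

/-- `L²(S¹)` inner product. -/
def l2Inner (u v : ℝ → ℂ) : ℂ := ∫ x in (0:ℝ)..1, u x * starRingEnd ℂ (v x)

/-- The principal symbol
`p_n(ω,y,η) = ∑_α (a_m²(y,η)/a_m²(F_α^{(n)}(ω,y,η))) ⋅ dG_α^{(n)}(ω,y)/dy`. -/
def pSym (k : ℕ) (θ : Ω → Ω) (E τ : Ω → ℝ → ℝ) (am : ℝ → ℝ) (n : ℕ) (ω : Ω)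
    (y η : ℝ) : ℝ :=
  ∑ α : Fin n → Fin k,
    (am η) ^ 2 / (am (canTraj θ E τ n (fun i => (α i : ℕ)) ω (y, η)).2) ^ 2
      * deriv (fun y' => (canTraj θ E τ n (fun i => (α i : ℕ)) ω (y', η)).1) y

/-- `P_n(ω) = (Q_{ν,n}(ω))^* Q_{ν,n}(ω) = A_m M*_{ν,n}(ω) A_m^{-2} M_{ν,n}(ω) A_m`,
where `A_m = a_m(hD)` and `h = 1/ν`. -/
def Pop (k : ℕ) (θ : Ω → Ω) (E τ : Ω → ℝ → ℝ) (am : ℝ → ℝ) (ν : ℤ) (n : ℕ) (ω : Ω)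
    (u : ℝ → ℂ) : ℝ → ℂ :=
  multiplierOp am (1 / (ν : ℝ)) <|
    transferStar k θ E τ ν n ω <|
      multiplierOp (fun ξ => ((am ξ) ^ 2)⁻¹) (1 / (ν : ℝ)) <|
        transferM θ E τ ν n ω <|
          multiplierOp am (1 / (ν : ℝ)) u

/-- `Q_{ν,n}(ω) = A_m^{-1} M_{ν,n}(ω) A_m`. -/
def Qop (k : ℕ) (θ : Ω → Ω) (E τ : Ω → ℝ → ℝ) (am : ℝ → ℝ) (ν : ℤ) (n : ℕ) (ω : Ω)
    (u : ℝ → ℂ) : ℝ → ℂ :=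
  multiplierOp (fun ξ => (am ξ)⁻¹) (1 / (ν : ℝ)) <|
    transferM θ E τ ν n ω <|
      multiplierOp am (1 / (ν : ℝ)) u

/-! ## Transversality (linear base) -/

/-- Jacobian of the skew product over the linear expanding map, at a point of the circle. -/
def jac1 (k : ℕ) (τ₀ : ℝ → ℝ) (x : S1) : Matrix (Fin 2) (Fin 2) ℝ :=
  !![(k : ℝ), 0; deriv τ₀ (lift01 x) / (2 * Real.pi), 1]

/-- Jacobian `Df₀ⁿ` of the iterated skew product (it depends only on the base point). -/
def jacN (k : ℕ) (τ₀ : ℝ → ℝ) : ℕ → S1 → Matrix (Fin 2) (Fin 2) ℝ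
  | 0, _ => 1
  | n + 1, x => jacN k τ₀ n (circMap (fun t => (k : ℝ) * t) x) * jac1 k τ₀ x

/-- A `2×2` matrix acting on `ℝ²`. -/
def mulVec2 (M : Matrix (Fin 2) (Fin 2) ℝ) (p : ℝ × ℝ) : ℝ × ℝ :=
  (M 0 0 * p.1 + M 0 1 * p.2, M 1 0 * p.1 + M 1 1 * p.2)

/-- The cone `𝒦_t = {(ξ,η) : |η| ≤ t|ξ|}`. -/
def cone (t : ℝ) : Set (ℝ × ℝ) := {p | |p.2| ≤ t * |p.1|}

/-- Transversality `ζ ⋔ w`: the images of the cone `𝒦_R` (with `ϑ_R = R/(λ₀-1)`, `λ₀ = k`)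
under `Df₀ⁿ(ζ)` and `Df₀ⁿ(w)` meet only at `0`. -/
def Transversal (k : ℕ) (τ₀ : ℝ → ℝ) (R : ℝ) (n : ℕ) (ζ w : T2) : Prop :=
  mulVec2 (jacN k τ₀ n ζ.1) '' cone (R / ((k : ℝ) - 1)) ∩
    mulVec2 (jacN k τ₀ n w.1) '' cone (R / ((k : ℝ) - 1)) ⊆ {((0:ℝ), (0:ℝ))}

/-- The skew product with linear base `f₀(x,s) = (kx mod 1, s + τ₀(x)/(2π) mod 1)`. -/
def skewD (k : ℕ) (τ₀ : ℝ → ℝ) : T2 → T2 := skewMap (fun x => (k : ℝ) * x) τ₀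

/-- `#{w ∈ f₀^{-n}(z) : w not transversal to ζ}`. -/
def notTransCount (k : ℕ) (τ₀ : ℝ → ℝ) (R : ℝ) (n : ℕ) (z ζ : T2) : ℕ :=
  Nat.card {w : T2 // (skewD k τ₀)^[n] w = z ∧ ¬ Transversal k τ₀ R n ζ w}

/-- `kⁿ φ_R(n) = sup_z sup_{ζ∈f₀^{-n}(z)} #{w ∈ f₀^{-n}(z) : w ⋔̸ ζ}`. -/
def phiCount (k : ℕ) (τ₀ : ℝ → ℝ) (R : ℝ) (n : ℕ) : ℕ :=
  sSup {c : ℕ | ∃ z ζ : T2, (skewD k τ₀)^[n] ζ = z ∧ notTransCount k τ₀ R n z ζ = c}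

/-- `φ_R(n) = k^{-n} sup_z sup_{ζ∈f₀^{-n}(z)} #{w ∈ f₀^{-n}(z) : w ⋔̸ ζ}`. -/
def phiR (k : ℕ) (τ₀ : ℝ → ℝ) (R : ℝ) (n : ℕ) : ℝ :=
  (phiCount k τ₀ R n : ℝ) / (k : ℝ) ^ n

/-! ## The spaces `C^m(S¹)` -/

/-- The space `C^m(S¹)` of `C^m` (`m ≤ ∞`) 1-periodic real functions. -/
def CmSpace (m : ℕ∞) : Type := {τ : ℝ → ℝ // ContDiff ℝ m τ ∧ Function.Periodic τ 1}

/-- The `C^m` topology: uniform convergence of all derivatives of order `≤ m`. -/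
instance (m : ℕ∞) : TopologicalSpace (CmSpace m) :=
  TopologicalSpace.induced
    (fun τ => fun j : {j : ℕ // (j : ℕ∞) ≤ m} => UniformFun.ofFun (iteratedDeriv j.1 τ.1))
    inferInstance

/-- Partial captivity of `f₀(x,s) = (kx mod 1, s + τ₀(x)/(2π) mod 1)` (linear base), with the
canonical choice `Z = S¹ × [-R_κ,R_κ]`, `κ = (λ+1)/2`, `λ = (k+1)/2`,
`R_κ = sup|τ₀'|/(λ-κ) = 4 sup|τ₀'|/(k-1)`. -/
def PartCaptLin (k : ℕ) (τ₀ : ℝ → ℝ) : Prop :=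
  PartiallyCaptive k (fun x => (k : ℝ) * x) τ₀ ((⨆ x : ℝ, |deriv τ₀ x|) * 4 / ((k : ℝ) - 1))


section Aux
set_option maxHeartbeats 1000000

open Function

namespace RPE7

/-- Expansion lower bound. -/
lemma expand_le {f : ℝ → ℝ} (hf : Differentiable ℝ f) {lam : ℝ}
    (h : ∀ x, lam ≤ deriv f x) {a b : ℝ} (hab : a ≤ b) :
    lam * (b - a) ≤ f b - f a := by
  have hg : Differentiable ℝ (fun x => f x - lam * x) :=
    hf.sub ((differentiable_id.const_mul lam))
  have hg' : ∀ x, 0 ≤ deriv (fun x => f x - lam * x) x := by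
    intro x
    have : deriv (fun x => f x - lam * x) x = deriv f x - lam := by
      rw [deriv_fun_sub (hf x) (by fun_prop)]
      have : deriv (fun x : ℝ => lam * x) x = lam := by
        rw [deriv_const_mul_field']; simp
      simp only [this]
    rw [this]; linarith [h x]
  have := monotone_of_deriv_nonneg hg hg' hab
  simp only at this
  nlinarith [this]

lemma expand_abs {f : ℝ → ℝ} (hf : Differentiable ℝ f) {lam : ℝ} (hlam : 0 ≤ lam)
    (h : ∀ x, lam ≤ deriv f x) (a b : ℝ) :
    lam * |b - a| ≤ |f b - f a| := by
  rcases le_total a b with hab | hab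
  · have h1 := expand_le hf h hab
    have h2 : 0 ≤ b - a := by linarith
    rw [abs_of_nonneg h2, abs_of_nonneg (le_trans (by positivity) h1)]
    exact h1
  · have h1 := expand_le hf h hab
    have h2 : 0 ≤ a - b := by linarith
    rw [abs_sub_comm, abs_sub_comm (f b), abs_of_nonneg h2,
      abs_of_nonneg (le_trans (by positivity) h1)]
    exact h1

lemma lift_nat {f : ℝ → ℝ} {k : ℕ} (hl : ∀ x, f (x + 1) = f x + k) (x : ℝ) (m : ℕ) :
    f (x + m) = f x + m * k := by
  induction m with
  | zero => simp
  | succ m ih =>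
    have : x + (m + 1 : ℕ) = (x + m) + 1 := by push_cast; ring
    rw [this, hl, ih]; push_cast; ring

lemma lift_surj {f : ℝ → ℝ} (hc : Continuous f) {k : ℕ} (hk : 1 ≤ k)
    (hl : ∀ x, f (x + 1) = f x + k) : Function.Surjective f := by
  intro t
  obtain ⟨m, hm⟩ := exists_nat_ge |t - f 0|
  have h1 : f m = f 0 + m * k := by simpa using lift_nat hl 0 m
  have h2 : f (-(m : ℝ)) = f 0 - m * k := by
    have := lift_nat hl (-(m : ℝ)) m
    simp at this; linarith
  have hk1 : (1 : ℝ) ≤ k := by exact_mod_cast hk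
  have habs := abs_le.mp hm
  have hlo : f (-(m : ℝ)) ≤ t := by nlinarith [habs.1]
  have hhi : t ≤ f m := by nlinarith [habs.2]
  have := intermediate_value_Icc (by linarith : -(m:ℝ) ≤ m) hc.continuousOn
  obtain ⟨x, _, hx⟩ := this ⟨hlo, hhi⟩
  exact ⟨x, hx⟩

lemma lift_bij {f : ℝ → ℝ} (hf : Differentiable ℝ f) {lam : ℝ} (hlam : 0 < lam)
    (h : ∀ x, lam ≤ deriv f x) {k : ℕ} (hk : 1 ≤ k) (hl : ∀ x, f (x + 1) = f x + k) :
    Function.Bijective f := by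
  constructor
  · exact (strictMono_of_deriv_pos (fun x => lt_of_lt_of_le hlam (h x))).injective
  · exact lift_surj (hf.continuous) hk hl

lemma invFun_right {f : ℝ → ℝ} (hf : Function.Bijective f) (t : ℝ) :
    f (Function.invFun f t) = t := rightInverse_invFun hf.2 t

lemma invFun_left {f : ℝ → ℝ} (hf : Function.Bijective f) (x : ℝ) :
    Function.invFun f (f x) = x := leftInverse_invFun hf.1 x

/-- Bound for a continuous periodic function. -/
lemma periodic_bound {f : ℝ → ℝ} (hc : Continuous f) (hp : ∀ x, f (x + 1) = f x) :
    ∃ C : ℝ, 0 ≤ C ∧ ∀ x, |f x| ≤ C := by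
  obtain ⟨C, hC⟩ := (isCompact_Icc (a := (0:ℝ)) (b := 1)).exists_bound_of_continuousOn
    hc.continuousOn
  refine ⟨max C 0, le_max_right _ _, fun x => ?_⟩
  have hper : Function.Periodic f 1 := hp
  have h1 : f (Int.fract x) = f x := by
    have h0 := hper.sub_int_mul_eq (x := x) ⌊x⌋
    rw [mul_one] at h0
    rw [Int.fract]
    exact h0
  have h2 : Int.fract x ∈ Set.Icc (0:ℝ) 1 :=
    ⟨Int.fract_nonneg x, le_of_lt (Int.fract_lt_one x)⟩
  calc |f x| = ‖f (Int.fract x)‖ := by rw [h1]; rfl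
  _ ≤ C := hC _ h2
  _ ≤ max C 0 := le_max_left _ _

/-- Lipschitz bound from derivative bound. -/
lemma lip_of_deriv {g : ℝ → ℝ} (hg : Differentiable ℝ g) {M : ℝ}
    (hM : ∀ x, |deriv g x| ≤ M) (a b : ℝ) : |g a - g b| ≤ M * |a - b| := by
  have := Convex.norm_image_sub_le_of_norm_deriv_le (f := g) (s := Set.univ)
    (fun x _ => hg x) (fun x _ => hM x) convex_univ (Set.mem_univ b) (Set.mem_univ a)
  simpa [Real.norm_eq_abs] using this

end RPE7

open Function

lemma canTraj_succ {Ω : Type*} (θ : Ω → Ω) (E τ : Ω → ℝ → ℝ) (n : ℕ) (α : Fin (n+1) → ℕ)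
    (ω : Ω) (p : ℝ × ℝ) :
    canTraj θ E τ (n+1) α ω p
      = canMap (E ω) (τ ω) (α (Fin.last n)) (canTraj θ E τ n (fun i => α i.castSucc) (θ ω) p) :=
  rfl

lemma cons_castSucc (n : ℕ) (j : ℕ) (α : Fin (n+1) → ℕ) :
    (fun i : Fin (n+1) => (Fin.cons j α : Fin (n+2) → ℕ) i.castSucc)
      = Fin.cons j (fun i : Fin n => α i.castSucc) := by
  funext i
  refine Fin.cases ?_ (fun i' => ?_) i
  · rfl
  · show (Fin.cons j α : Fin (n+2) → ℕ) (i'.succ.castSucc) = α i'.castSucc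
    rw [← Fin.succ_castSucc, Fin.cons_succ]

lemma canTraj_cons (E₀ τ₀ : ℝ → ℝ) :
    ∀ (n : ℕ) (α : Fin n → ℕ) (j : ℕ) (p : ℝ × ℝ),
    canTraj (id : Unit → Unit) (fun _ => E₀) (fun _ => τ₀) (n+1) (Fin.cons j α) () p
      = canTraj (id : Unit → Unit) (fun _ => E₀) (fun _ => τ₀) n α () (canMap E₀ τ₀ j p) := by
  intro n
  induction n with
  | zero =>
    intro α j p
    show canMap E₀ τ₀ ((Fin.cons j α : Fin 1 → ℕ) (Fin.last 0)) _ = _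
    rfl
  | succ n ih =>
    intro α j p
    conv_lhs => rw [canTraj_succ]
    conv_rhs => rw [canTraj_succ]
    have h1 : (Fin.cons j α : Fin (n+2) → ℕ) (Fin.last (n+1)) = α (Fin.last n) := by
      rw [← Fin.succ_last, Fin.cons_succ]
    rw [h1, cons_castSucc, ih]

lemma dT_slope (E₀ τ₀ : ℝ → ℝ) (lam0 Λ : ℝ) (hlam0 : 0 ≤ lam0)
    (hlow : ∀ x, lam0 ≤ deriv E₀ x) (hup : ∀ x, deriv E₀ x ≤ Λ) :
    ∀ (n : ℕ) (α : Fin n → ℕ) (y : ℝ), ∃ D : ℝ, lam0 ^ n ≤ D ∧ D ≤ Λ ^ n ∧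
      ∀ η η' : ℝ,
        (canTraj (id : Unit → Unit) (fun _ => E₀) (fun _ => τ₀) n α () (y, η')).1
          = (canTraj (id : Unit → Unit) (fun _ => E₀) (fun _ => τ₀) n α () (y, η)).1 ∧
        (canTraj (id : Unit → Unit) (fun _ => E₀) (fun _ => τ₀) n α () (y, η')).2
          - (canTraj (id : Unit → Unit) (fun _ => E₀) (fun _ => τ₀) n α () (y, η)).2
          = D * (η' - η) := by
  intro n
  induction n with
  | zero =>
    intro α y
    exact ⟨1, by norm_num, by norm_num, fun η η' => ⟨rfl, by show η' - η = 1 * (η' - η); ring⟩⟩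
  | succ n ih =>
    intro α y
    obtain ⟨D, hD1, hD2, hD⟩ := ih (fun i => α i.castSucc) y
    have hDnn : 0 ≤ D := le_trans (by positivity) hD1
    set c := (canTraj (id : Unit → Unit) (fun _ => E₀) (fun _ => τ₀) n
      (fun i => α i.castSucc) () (y, 0)).1 with hc
    set x₀ := Function.invFun E₀ (c + ((α (Fin.last n) : ℕ) : ℝ)) with hx₀
    have hΛ0 : (0:ℝ) ≤ Λ := le_trans (le_trans hlam0 (hlow 0)) (hup 0)
    refine ⟨deriv E₀ x₀ * D, ?_, ?_, ?_⟩
    · have h : lam0 * lam0 ^ n ≤ deriv E₀ x₀ * D :=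
        mul_le_mul (hlow x₀) hD1 (by positivity) (le_trans hlam0 (hlow x₀))
      calc lam0 ^ (n+1) = lam0 * lam0 ^ n := by ring
      _ ≤ _ := h
    · have h : deriv E₀ x₀ * D ≤ Λ * Λ ^ n := mul_le_mul (hup x₀) hD2 hDnn hΛ0
      calc deriv E₀ x₀ * D ≤ Λ * Λ ^ n := h
      _ = Λ ^ (n+1) := by ring
    · intro η η'
      obtain ⟨he1, he2⟩ := hD η η'
      obtain ⟨hf1, -⟩ := hD η 0
      simp only [canTraj_succ, canMap, id_eq]
      rw [he1, ← hf1, ← hc, ← hx₀]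
      refine ⟨rfl, ?_⟩
      linear_combination (deriv E₀ x₀) * he2


open Function

/-- Goodness of a single pair of (lifted) maps. -/
def GoodAt (f g E₀ τ₀ : ℝ → ℝ) (lam Cτ δ₁ : ℝ) : Prop :=
  Differentiable ℝ f ∧ Function.Bijective f ∧
  (∀ x, lam ≤ deriv f x) ∧ (∀ x, |deriv g x| ≤ Cτ) ∧
  (∀ x, |f x - E₀ x| ≤ δ₁) ∧ (∀ x, |deriv f x - deriv E₀ x| ≤ δ₁) ∧
  (∀ x, |deriv g x - deriv τ₀ x| ≤ δ₁)

def GoodOrb {Ω : Type*} (θ : Ω → Ω) (A B : Ω → ℝ → ℝ) (E₀ τ₀ : ℝ → ℝ)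
    (lam Cτ δ₁ : ℝ) (ω : Ω) : Prop :=
  ∀ i : ℕ, GoodAt (A (θ^[i] ω)) (B (θ^[i] ω)) E₀ τ₀ lam Cτ δ₁

lemma GoodOrb.head {Ω : Type*} {θ : Ω → Ω} {A B : Ω → ℝ → ℝ} {E₀ τ₀ : ℝ → ℝ}
    {lam Cτ δ₁ : ℝ} {ω : Ω} (h : GoodOrb θ A B E₀ τ₀ lam Cτ δ₁ ω) :
    GoodAt (A ω) (B ω) E₀ τ₀ lam Cτ δ₁ := by
  have := h 0; simpa using this

lemma GoodOrb.tail {Ω : Type*} {θ : Ω → Ω} {A B : Ω → ℝ → ℝ} {E₀ τ₀ : ℝ → ℝ}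
    {lam Cτ δ₁ : ℝ} {ω : Ω} (h : GoodOrb θ A B E₀ τ₀ lam Cτ δ₁ ω) :
    GoodOrb θ A B E₀ τ₀ lam Cτ δ₁ (θ ω) := by
  intro i
  have := h (i + 1)
  rwa [Function.iterate_succ_apply] at this

lemma castLE_castSucc {n m : ℕ} (hm : m ≤ n) :
    (fun i : Fin m => Fin.castSucc (Fin.castLE hm i))
      = (fun i : Fin m => Fin.castLE (Nat.le_succ_of_le hm) i) := rfl

/-- Backward boundedness of trapped branches. -/
lemma backward_bound {Ω : Type*} (θ : Ω → Ω) (A B : Ω → ℝ → ℝ) (E₀ τ₀ : ℝ → ℝ)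
    (lam Cτ R δ₁ : ℝ) (hlam : 1 < lam) (hCτ : 0 < Cτ) (hR : 2 * Cτ ≤ (lam - 1) * R) :
    ∀ (n : ℕ) (ω : Ω), GoodOrb θ A B E₀ τ₀ lam Cτ δ₁ ω →
    ∀ (α : Fin n → ℕ) (p : ℝ × ℝ), |p.2| ≤ R →
      |(canTraj θ A B n α ω p).2| ≤ R + Cτ →
    ∀ (m : ℕ) (hm : m ≤ n),
      |(canTraj θ A B m (fun i => α (Fin.castLE hm i)) (θ^[n - m] ω) p).2| ≤ R + Cτ := by
  intro n
  induction n with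
  | zero =>
    intro ω hGood α p hp hfin m hm
    interval_cases m
    exact le_trans hp (by linarith)
  | succ n ih =>
    intro ω hGood α p hp hfin m hm
    have hgood0 := hGood.head
    obtain ⟨hdiff, hbij, hder, hτb, -, -, -⟩ := hgood0
    -- bound on the previous point
    have hprev : |(canTraj θ A B n (fun i => α i.castSucc) (θ ω) p).2| ≤ R + Cτ := by
      rw [canTraj_succ] at hfin
      set q := canTraj θ A B n (fun i => α i.castSucc) (θ ω) p with hq
      set x := Function.invFun (A ω) (q.1 + ((α (Fin.last n) : ℕ) : ℝ)) with hx
      have h1 : |deriv (A ω) x * q.2| ≤ R + Cτ + Cτ := by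
        have : canMap (A ω) (B ω) (α (Fin.last n)) q
            = (x, deriv (A ω) x * q.2 + deriv (B ω) x) := rfl
        rw [this] at hfin
        have := hτb x
        have habs : |deriv (A ω) x * q.2| - |deriv (B ω) x|
            ≤ |deriv (A ω) x * q.2 + deriv (B ω) x| := by
          have := abs_add_le (deriv (A ω) x * q.2 + deriv (B ω) x) (-(deriv (B ω) x))
          simp at this
          linarith [this, abs_mul (deriv (A ω) x) q.2]
        simp only at hfin
        linarith
      have h2 : lam * |q.2| ≤ |deriv (A ω) x * q.2| := by
        rw [abs_mul]
        have : lam ≤ |deriv (A ω) x| := le_trans (hder x) (le_abs_self _)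
        exact mul_le_mul_of_nonneg_right this (abs_nonneg _) |>.trans
          (mul_le_mul_of_nonneg_right le_rfl (abs_nonneg _))
      nlinarith [abs_nonneg q.2, h1, h2]
    rcases Nat.lt_or_ge m (n+1) with hlt | hge
    · have hm' : m ≤ n := by omega
      have := ih (θ ω) hGood.tail (fun i => α i.castSucc) p hp hprev m hm'
      have heq : (fun i : Fin m => (fun i : Fin n => α i.castSucc) (Fin.castLE hm' i))
          = (fun i : Fin m => α (Fin.castLE hm i)) := rfl
      rw [heq] at this
      have hit : (n + 1) - m = (n - m) + 1 := by omega
      rw [hit, Function.iterate_succ_apply]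
      exact this
    · have hm1 : m = n + 1 := by omega
      subst hm1
      have heq : (fun i : Fin (n+1) => α (Fin.castLE hm i)) = α := rfl
      rw [heq]
      simpa using hfin


set_option maxHeartbeats 1000000
open Function RPE7

/-- Forward comparison of perturbed and unperturbed branches. -/
lemma forward_compare {Ω : Type*} (θ : Ω → Ω) (A B : Ω → ℝ → ℝ) (E₀ τ₀ : ℝ → ℝ)
    (lam0 Λ M lam Cτ R δ₁ C : ℝ)
    (hlam0 : 1 < lam0) (hlam : 0 < lam) (hδ₁ : 0 ≤ δ₁)
    (hE₀d : Differentiable ℝ E₀) (hE₀bij : Function.Bijective E₀)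
    (hE₀low : ∀ x, lam0 ≤ deriv E₀ x) (hE₀up : ∀ x, deriv E₀ x ≤ Λ)
    (hLipE : ∀ a b, |deriv E₀ a - deriv E₀ b| ≤ M * |a - b|)
    (hLipτ : ∀ a b, |deriv τ₀ a - deriv τ₀ b| ≤ M * |a - b|)
    (hM : 0 ≤ M) (hRpos : 0 ≤ R) (hCτ : 0 < Cτ)
    (hC1 : 1 ≤ C) (hC0 : (Λ + 1) + (R + Cτ + 2) * (1 + M) ≤ C) :
    ∀ (n : ℕ) (ω : Ω), GoodOrb θ A B E₀ τ₀ lam Cτ δ₁ ω →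
    ∀ (α : Fin n → ℕ) (p : ℝ × ℝ),
      (2*C)^n * δ₁ ≤ 1 →
      (∀ (m : ℕ) (hm : m ≤ n),
        |(canTraj θ A B m (fun i => α (Fin.castLE hm i)) (θ^[n - m] ω) p).2| ≤ R + Cτ) →
      |(canTraj θ A B n α ω p).1
        - (canTraj (id : Unit → Unit) (fun _ => E₀) (fun _ => τ₀) n α () p).1|
        ≤ ((2*C)^n - 1) * δ₁ ∧
      |(canTraj θ A B n α ω p).2
        - (canTraj (id : Unit → Unit) (fun _ => E₀) (fun _ => τ₀) n α () p).2|
        ≤ ((2*C)^n - 1) * δ₁ := by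
  intro n
  induction n with
  | zero =>
    intro ω hGood α p hsm htrap
    constructor <;> simp [canTraj]
  | succ n ih =>
    intro ω hGood α p hsm htrap
    obtain ⟨hAd, hAbij, hAlow, hBb, hA0, hA1, hB1⟩ := hGood.head
    have hΛ : lam0 ≤ Λ := le_trans (hE₀low 0) (hE₀up 0)
    have hC2 : (1:ℝ) ≤ 2*C := by linarith
    have hpown : (1:ℝ) ≤ (2*C)^n := one_le_pow₀ hC2
    have hpown1 : (1:ℝ) ≤ (2*C)^(n+1) := one_le_pow₀ hC2
    have hexp : (2*C)^(n+1) = (2*C)^n * (2*C) := by ring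
    have hmono : (2*C)^n ≤ (2*C)^(n+1) := by nlinarith
    have hsm' : (2*C)^n * δ₁ ≤ 1 := le_trans (by nlinarith) hsm
    have hδle1 : δ₁ ≤ 1 := le_trans (by nlinarith) hsm
    have htrap' : ∀ (m : ℕ) (hm : m ≤ n),
        |(canTraj θ A B m (fun i => (fun i : Fin n => α i.castSucc) (Fin.castLE hm i))
          (θ^[n - m] (θ ω)) p).2| ≤ R + Cτ := by
      intro m hm
      have h := htrap m (le_trans hm (Nat.le_succ n))
      have heq : (fun i : Fin m => α (Fin.castLE (le_trans hm (Nat.le_succ n)) i))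
          = (fun i : Fin m => (fun i : Fin n => α i.castSucc) (Fin.castLE hm i)) := rfl
      rw [heq] at h
      have hit : (n + 1) - m = (n - m) + 1 := by omega
      rw [hit, Function.iterate_succ_apply] at h
      exact h
    obtain ⟨hΔ1, hΔ2⟩ := ih (θ ω) hGood.tail (fun i => α i.castSucc) p hsm' htrap'
    have hqεtrap : |(canTraj θ A B n (fun i => α i.castSucc) (θ ω) p).2| ≤ R + Cτ := by
      have h := htrap n (Nat.le_succ n)
      have heq : (fun i : Fin n => α (Fin.castLE (Nat.le_succ n) i))
          = fun i : Fin n => α i.castSucc := rfl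
      rw [heq] at h
      simpa using h
    simp only [canTraj_succ, canMap, id_eq]
    set qε := canTraj θ A B n (fun i => α i.castSucc) (θ ω) p with hqε
    set q0 := canTraj (id : Unit → Unit) (fun _ => E₀) (fun _ => τ₀) n
      (fun i => α i.castSucc) () p with hq0
    set j : ℝ := ((α (Fin.last n) : ℕ) : ℝ) with hj
    set xε := Function.invFun (A ω) (qε.1 + j) with hxε
    set x0 := Function.invFun E₀ (q0.1 + j) with hx0
    have hAxε : A ω xε = qε.1 + j := invFun_right hAbij _
    have hE₀x0 : E₀ x0 = q0.1 + j := invFun_right hE₀bij _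
    have hlam0' : (0:ℝ) ≤ lam0 := by linarith
    have h1 : lam0 * |xε - x0| ≤ |E₀ xε - E₀ x0| := expand_abs hE₀d hlam0' hE₀low x0 xε
    have h2 : |E₀ xε - E₀ x0| ≤ δ₁ + |qε.1 - q0.1| := by
      have e : E₀ xε - E₀ x0 = (E₀ xε - A ω xε) + (qε.1 - q0.1) := by
        rw [hAxε, hE₀x0]; ring
      rw [e]
      have h4 := abs_add_le (E₀ xε - A ω xε) (qε.1 - q0.1)
      have h3 : |E₀ xε - A ω xε| ≤ δ₁ := by rw [abs_sub_comm]; exact hA0 xε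
      linarith
    have hdx : |xε - x0| ≤ δ₁ + |qε.1 - q0.1| := by
      nlinarith [abs_nonneg (xε - x0), h1, h2,
        mul_nonneg (by linarith : (0:ℝ) ≤ lam0 - 1) (abs_nonneg (xε - x0))]
    have hgap : (2*C)^n + 1 ≤ (2*C)^(n+1) := by
      nlinarith [mul_le_mul hpown (by linarith : (1:ℝ) ≤ 2*C - 1)
        (by linarith) (by linarith : (0:ℝ) ≤ (2*C)^n), hexp]
    have hXnn : (0:ℝ) ≤ (2*C)^n * δ₁ := by positivity
    have hδΔ : |qε.1 - q0.1| ≤ (2*C)^n * δ₁ - δ₁ := by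
      calc |qε.1 - q0.1| ≤ ((2*C)^n - 1) * δ₁ := hΔ1
      _ = (2*C)^n * δ₁ - δ₁ := by ring
    have hdx2 : |xε - x0| ≤ (2*C)^n * δ₁ := by linarith
    have hbig : (2*C)^n * δ₁ ≤ ((2*C)^(n+1) - 1) * δ₁ := by
      nlinarith [mul_nonneg (by linarith : (0:ℝ) ≤ (2*C)^(n+1) - (2*C)^n - 1) hδ₁]
    constructor
    · -- first components
      linarith
    · -- second components
      have bA : |deriv (A ω) xε| ≤ Λ + 1 := by
        have e : deriv (A ω) xε = (deriv (A ω) xε - deriv E₀ xε) + deriv E₀ xε := by ring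
        have h5 := abs_add_le (deriv (A ω) xε - deriv E₀ xε) (deriv E₀ xε)
        have h6 : |deriv E₀ xε| = deriv E₀ xε := abs_of_nonneg (by linarith [hE₀low xε])
        calc |deriv (A ω) xε| = |(deriv (A ω) xε - deriv E₀ xε) + deriv E₀ xε| := by rw [← e]
        _ ≤ |deriv (A ω) xε - deriv E₀ xε| + |deriv E₀ xε| := h5
        _ ≤ δ₁ + Λ := by rw [h6]; linarith [hA1 xε, hE₀up xε]
        _ ≤ Λ + 1 := by linarith
      have bE : |deriv (A ω) xε - deriv E₀ x0| ≤ δ₁ + M * |xε - x0| := by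
        have e : deriv (A ω) xε - deriv E₀ x0
            = (deriv (A ω) xε - deriv E₀ xε) + (deriv E₀ xε - deriv E₀ x0) := by ring
        rw [e]
        have h5 := abs_add_le (deriv (A ω) xε - deriv E₀ xε) (deriv E₀ xε - deriv E₀ x0)
        linarith [hA1 xε, hLipE xε x0]
      have bB : |deriv (B ω) xε - deriv τ₀ x0| ≤ δ₁ + M * |xε - x0| := by
        have e : deriv (B ω) xε - deriv τ₀ x0
            = (deriv (B ω) xε - deriv τ₀ xε) + (deriv τ₀ xε - deriv τ₀ x0) := by ring
        rw [e]
        have h5 := abs_add_le (deriv (B ω) xε - deriv τ₀ xε) (deriv τ₀ xε - deriv τ₀ x0)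
        linarith [hB1 xε, hLipτ xε x0]
      have bq : |q0.2| ≤ R + Cτ + 1 := by
        have h5 := abs_sub_abs_le_abs_sub q0.2 qε.2
        have h6 : |q0.2 - qε.2| = |qε.2 - q0.2| := abs_sub_comm _ _
        nlinarith
      have key : |deriv (A ω) xε * qε.2 + deriv (B ω) xε
            - (deriv E₀ x0 * q0.2 + deriv τ₀ x0)|
          ≤ |deriv (A ω) xε| * |qε.2 - q0.2| + |deriv (A ω) xε - deriv E₀ x0| * |q0.2|
            + |deriv (B ω) xε - deriv τ₀ x0| := by
        have e : deriv (A ω) xε * qε.2 + deriv (B ω) xε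
              - (deriv E₀ x0 * q0.2 + deriv τ₀ x0)
            = (deriv (A ω) xε * (qε.2 - q0.2) + (deriv (A ω) xε - deriv E₀ x0) * q0.2)
              + (deriv (B ω) xε - deriv τ₀ x0) := by ring
        rw [e]
        calc _ ≤ |deriv (A ω) xε * (qε.2 - q0.2) + (deriv (A ω) xε - deriv E₀ x0) * q0.2|
              + |deriv (B ω) xε - deriv τ₀ x0| := abs_add_le _ _
        _ ≤ |deriv (A ω) xε * (qε.2 - q0.2)| + |(deriv (A ω) xε - deriv E₀ x0) * q0.2|
              + |deriv (B ω) xε - deriv τ₀ x0| := by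
            linarith [abs_add_le (deriv (A ω) xε * (qε.2 - q0.2))
              ((deriv (A ω) xε - deriv E₀ x0) * q0.2)]
        _ = _ := by rw [abs_mul, abs_mul]
      have t1 : |deriv (A ω) xε| * |qε.2 - q0.2| ≤ (Λ + 1) * ((2*C)^n * δ₁ - δ₁) := by
        have := mul_le_mul bA (le_trans hΔ2 (by ring_nf; rfl : ((2*C)^n - 1) * δ₁ ≤ (2*C)^n * δ₁ - δ₁))
          (abs_nonneg _) (by linarith)
        exact this
      have t2 : |deriv (A ω) xε - deriv E₀ x0| * |q0.2|
          ≤ (δ₁ + M * ((2*C)^n * δ₁)) * (R + Cτ + 1) := by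
        have hb : |deriv (A ω) xε - deriv E₀ x0| ≤ δ₁ + M * ((2*C)^n * δ₁) := by
          have := mul_le_mul_of_nonneg_left hdx2 hM
          linarith
        exact mul_le_mul hb bq (abs_nonneg _) (by nlinarith)
      have t3 : |deriv (B ω) xε - deriv τ₀ x0| ≤ δ₁ + M * ((2*C)^n * δ₁) := by
        have := mul_le_mul_of_nonneg_left hdx2 hM
        linarith
      have f1 : ((Λ + 1) + (R + Cτ + 2) * (1 + M)) * ((2*C)^n * δ₁) ≤ C * ((2*C)^n * δ₁) :=
        mul_le_mul_of_nonneg_right hC0 hXnn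
      have f2 : (0:ℝ) ≤ C * ((2*C)^n * δ₁) := by positivity
      have hδX : δ₁ ≤ (2*C)^n * δ₁ := by
        nlinarith [mul_le_mul_of_nonneg_right hpown hδ₁]
      have e2 : ((2*C)^(n+1) - 1) * δ₁ = 2*C*((2*C)^n * δ₁) - δ₁ := by ring
      rw [e2]
      nlinarith [key, t1, t2, t3, f1, f2, hδX,
        mul_nonneg (mul_nonneg hM hXnn) (by linarith : (0:ℝ) ≤ R + Cτ)]


set_option maxHeartbeats 1000000
open Function RPE7

lemma trajCount_le_pow {Ω : Type*} (k : ℕ) (θ : Ω → Ω) (E τ : Ω → ℝ → ℝ) (R : ℝ)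
    (n : ℕ) (ω : Ω) (p : ℝ × ℝ) : trajCount k θ E τ R n ω p ≤ k ^ n := by
  unfold trajCount
  have h := Nat.card_le_card_of_injective
    (Subtype.val : {α : Fin n → Fin k // |(canTraj θ E τ n (fun i => (α i : ℕ)) ω p).2| ≤ R}
      → (Fin n → Fin k)) Subtype.val_injective
  rwa [Nat.card_eq_fintype_card (α := Fin n → Fin k), Fintype.card_fun, Fintype.card_fin,
    Fintype.card_fin] at h

lemma Ncount_le {Ω : Type*} (k : ℕ) (θ : Ω → Ω) (E τ : Ω → ℝ → ℝ) (R : ℝ) (hR : 0 ≤ R)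
    (n : ℕ) (ω : Ω) (m : ℕ)
    (h : ∀ p : ℝ × ℝ, |p.2| ≤ R → trajCount k θ E τ R n ω p ≤ m) :
    Ncount k θ E τ R n ω ≤ m := by
  refine csSup_le ⟨trajCount k θ E τ R n ω (0, 0), ⟨(0,0), by simpa using hR, rfl⟩⟩ ?_
  rintro c ⟨p, hp, rfl⟩
  exact h p hp

lemma trajCount_le_NcountD (k : ℕ) (E₀ τ₀ : ℝ → ℝ) (R : ℝ) (n : ℕ) (p : ℝ × ℝ)
    (hp : |p.2| ≤ R) :
    trajCount k (id : Unit → Unit) (fun _ => E₀) (fun _ => τ₀) R n () p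
      ≤ NcountD k E₀ τ₀ R n := by
  refine le_csSup ⟨k ^ n, ?_⟩ ⟨p, hp, rfl⟩
  rintro c ⟨q, hq, rfl⟩
  exact trajCount_le_pow _ _ _ _ _ _ _ _



/-- Per-point counting estimate: perturbed trapped branches at time `n` are at most
`3` times the deterministic count at time `n+1`. -/
lemma count_main {Ω : Type*} (k : ℕ) (hk : 2 ≤ k) (θ : Ω → Ω) (A B : Ω → ℝ → ℝ)
    (E₀ τ₀ : ℝ → ℝ) (lam0 Λ M lam Cτ R δ₁ C : ℝ)
    (hlam0 : 1 < lam0) (hδ₁ : 0 ≤ δ₁)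
    (hE₀d : Differentiable ℝ E₀) (hE₀bij : Function.Bijective E₀)
    (hE₀low : ∀ x, lam0 ≤ deriv E₀ x) (hE₀up : ∀ x, deriv E₀ x ≤ Λ)
    (hLipE : ∀ a b, |deriv E₀ a - deriv E₀ b| ≤ M * |a - b|)
    (hLipτ : ∀ a b, |deriv τ₀ a - deriv τ₀ b| ≤ M * |a - b|)
    (hτ₀b : ∀ x, |deriv τ₀ x| ≤ Cτ)
    (hM : 0 ≤ M) (hR : 0 < R) (hCτ : 0 < Cτ)
    (hlam : 1 < lam) (hlamR : 2 * Cτ ≤ (lam - 1) * R)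
    (h4C : 4 * Cτ ≤ (lam0 - 1) * R)
    (hC1 : 1 ≤ C) (hC0 : (Λ + 1) + (R + Cτ + 2) * (1 + M) ≤ C)
    (n : ℕ) (ω : Ω) (hGood : GoodOrb θ A B E₀ τ₀ lam Cτ δ₁ ω)
    (hsm : (2*C)^n * δ₁ ≤ 1)
    (hDn : ((2*C)^n - 1) * δ₁ ≤ min (2*R) (3*Cτ) * (lam0 / Λ)^n)
    (p : ℝ × ℝ) (hp : |p.2| ≤ R) :
    trajCount k θ A B R n ω p ≤ 3 * NcountD k E₀ τ₀ R (n+1) := by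
  have : NeZero k := ⟨by omega⟩
  have hΛ : lam0 ≤ Λ := le_trans (hE₀low 0) (hE₀up 0)
  have hΛ0 : (0:ℝ) < Λ := by linarith
  have hlam00 : (0:ℝ) < lam0 := by linarith
  set m3 : ℝ := min (2*R) (3*Cτ) with hm3
  have hm30 : 0 < m3 := lt_min (by linarith) (by linarith)
  set ρ : ℝ := m3 * (lam0 / Λ)^n with hρ
  have hρ0 : 0 < ρ := by positivity
  set s : ℝ := m3 / Λ ^ n with hs
  have hs0 : 0 < s := by positivity
  have hsρ : lam0 ^ n * s = ρ := by
    rw [hs, hρ, div_pow]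
    field_simp
  have hsΛ : Λ ^ n * s = m3 := by
    rw [hs]; field_simp
  have hsle : s ≤ 3 * Cτ := by
    have h1 : (1:ℝ) ≤ Λ ^ n := one_le_pow₀ (by linarith)
    have := div_le_self (le_of_lt hm30) h1
    rw [hs]
    exact le_trans this (min_le_right _ _)
  -- the three deterministic trapped sets
  set dT : (Fin n → ℕ) → ℝ × ℝ → ℝ × ℝ :=
    fun α q => canTraj (id : Unit → Unit) (fun _ => E₀) (fun _ => τ₀) n α () q with hdT
  set Qset : ℝ → Set (Fin n → Fin k) :=
    fun t => {α | |(dT (fun i => (α i : ℕ)) (p.1, t)).2| ≤ R} with hQset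
  set Tset : Set (Fin n → Fin k) :=
    {α | |(canTraj θ A B n (fun i => (α i : ℕ)) ω p).2| ≤ R} with hTset
  -- Claim 1: T ⊆ Q(p.2) ∪ Q(p.2 - s) ∪ Q(p.2 + s)
  have claim1 : Tset ⊆ Qset p.2 ∪ Qset (p.2 - s) ∪ Qset (p.2 + s) := by
    intro α hα
    have hαT : |(canTraj θ A B n (fun i => (α i : ℕ)) ω p).2| ≤ R := hα
    have htr := backward_bound θ A B E₀ τ₀ lam Cτ R δ₁ hlam hCτ hlamR n ω hGood
      (fun i => (α i : ℕ)) p hp (le_trans hαT (by linarith))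
    have hfwd := (forward_compare θ A B E₀ τ₀ lam0 Λ M lam Cτ R δ₁ C hlam0
      (by linarith) hδ₁ hE₀d hE₀bij hE₀low hE₀up hLipE hLipτ hM (le_of_lt hR) hCτ hC1 hC0
      n ω hGood (fun i => (α i : ℕ)) p hsm htr).2
    set v := (dT (fun i => (α i : ℕ)) (p.1, p.2)).2 with hv
    have hpeta : (p.1, p.2) = p := Prod.mk.eta
    have hvv : |v| ≤ R + ρ := by
      have h1 : |v - (canTraj θ A B n (fun i => (α i : ℕ)) ω p).2| ≤ ρ := by
        rw [hv, hpeta, abs_sub_comm]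
        exact le_trans hfwd hDn
      calc |v| ≤ |v - (canTraj θ A B n (fun i => (α i : ℕ)) ω p).2|
          + |(canTraj θ A B n (fun i => (α i : ℕ)) ω p).2| := by
            have := abs_add_le (v - (canTraj θ A B n (fun i => (α i : ℕ)) ω p).2)
              ((canTraj θ A B n (fun i => (α i : ℕ)) ω p).2)
            simpa using this
      _ ≤ R + ρ := by linarith
    obtain ⟨D, hD1, hD2, hD⟩ := dT_slope E₀ τ₀ lam0 Λ (by linarith) hE₀low hE₀up
      n (fun i => (α i : ℕ)) p.1
    have hDs1 : ρ ≤ D * s :=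
      le_trans (le_of_eq hsρ.symm) (mul_le_mul_of_nonneg_right hD1 (le_of_lt hs0))
    have hDs2 : D * s ≤ m3 :=
      le_trans (mul_le_mul_of_nonneg_right hD2 (le_of_lt hs0)) (le_of_eq hsΛ)
    have hm32R : m3 ≤ 2 * R := min_le_left _ _
    rcases le_or_gt |v| R with hcase | hcase
    · left; left
      show |(dT (fun i => (α i : ℕ)) (p.1, p.2)).2| ≤ R
      exact hcase
    · rcases le_or_gt v 0 with hsign | hsign
      · -- v < -R, use η + s
        have hvlt : v < -R := by
          rcases abs_cases v with ⟨h1, _⟩ | ⟨h1, _⟩ <;> [linarith; linarith]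
        right
        show |(dT (fun i => (α i : ℕ)) (p.1, p.2 + s)).2| ≤ R
        have hD' := (hD p.2 (p.2 + s)).2
        have hD'' : (dT (fun i => (α i : ℕ)) (p.1, p.2 + s)).2 - v = D * (p.2 + s - p.2) := hD'
        have he : p.2 + s - p.2 = s := by ring
        rw [he] at hD''
        rw [abs_le]
        have habs := abs_le.mp hvv
        constructor <;> nlinarith [habs.1, habs.2]
      · -- v > R, use η - s
        have hvgt : R < v := by
          rcases abs_cases v with ⟨h1, _⟩ | ⟨h1, _⟩ <;> [linarith; linarith]
        left; right
        show |(dT (fun i => (α i : ℕ)) (p.1, p.2 - s)).2| ≤ R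
        have hD' := (hD p.2 (p.2 - s)).2
        have hD'' : (dT (fun i => (α i : ℕ)) (p.1, p.2 - s)).2 - v = D * (p.2 - s - p.2) := hD'
        have he : p.2 - s - p.2 = -s := by ring
        rw [he] at hD''
        rw [abs_le]
        have habs := abs_le.mp hvv
        constructor <;> nlinarith [habs.1, habs.2]
  -- Claim 2: each deterministic trapped set injects into time-(n+1) branches
  have claim2 : ∀ t : ℝ, |t| ≤ R + s →
      (Qset t).ncard ≤ NcountD k E₀ τ₀ R (n+1) := by
    intro t ht
    set p'' : ℝ × ℝ := (E₀ p.1, (t - deriv τ₀ p.1) / deriv E₀ p.1) with hp''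
    have hE0p : 0 < deriv E₀ p.1 := lt_of_lt_of_le (by linarith) (hE₀low p.1)
    have hp2 : |p''.2| ≤ R := by
      show |(t - deriv τ₀ p.1) / deriv E₀ p.1| ≤ R
      rw [abs_div, abs_of_pos hE0p, div_le_iff₀ hE0p]
      have h1 : |t - deriv τ₀ p.1| ≤ |t| + |deriv τ₀ p.1| := abs_sub _ _
      have h2 := hτ₀b p.1
      have h3 := mul_le_mul_of_nonneg_left (hE₀low p.1) (le_of_lt hR)
      nlinarith
    have hinv : Function.invFun E₀ (p''.1 + (((0:ℕ):ℝ))) = p.1 := by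
      have : p''.1 + (((0:ℕ):ℝ)) = E₀ p.1 := by
        show E₀ p.1 + (((0:ℕ):ℝ)) = E₀ p.1
        norm_num
      rw [this]
      exact invFun_left hE₀bij p.1
    have hcan : canMap E₀ τ₀ 0 p'' = (p.1, t) := by
      unfold canMap
      rw [hinv]
      refine Prod.ext rfl ?_
      show deriv E₀ p.1 * ((t - deriv τ₀ p.1) / deriv E₀ p.1) + deriv τ₀ p.1 = t
      field_simp
      ring
    have hinj : ∀ α : Fin n → Fin k, α ∈ Qset t →
        |(canTraj (id : Unit → Unit) (fun _ => E₀) (fun _ => τ₀) (n+1)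
          (fun i => ((Fin.cons (0 : Fin k) α : Fin (n+1) → Fin k) i : ℕ)) () p'').2| ≤ R := by
      intro α hα
      have hcons : (fun i => ((Fin.cons (0 : Fin k) α : Fin (n+1) → Fin k) i : ℕ))
          = Fin.cons (0:ℕ) (fun i => (α i : ℕ)) := by
        funext i
        refine Fin.cases ?_ (fun i' => ?_) i
        · simp
        · simp [Fin.cons_succ]
      rw [hcons, canTraj_cons, hcan]
      exact hα
    have hcard : (Qset t).ncard
        ≤ trajCount k (id : Unit → Unit) (fun _ => E₀) (fun _ => τ₀) R (n+1) () p'' := by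
      rw [← Nat.card_coe_set_eq]
      exact Nat.card_le_card_of_injective
        (fun a => (⟨Fin.cons (0 : Fin k) a.1, hinj a.1 a.2⟩ :
          {β : Fin (n+1) → Fin k //
            |(canTraj (id : Unit → Unit) (fun _ => E₀) (fun _ => τ₀) (n+1)
              (fun i => (β i : ℕ)) () p'').2| ≤ R}))
        (by
          rintro ⟨a, ha⟩ ⟨b, hb⟩ hab
          have := congrArg Subtype.val hab
          simp only at this
          exact Subtype.ext (Fin.cons_right_injective _ this))
    exact le_trans hcard (trajCount_le_NcountD k E₀ τ₀ R (n+1) p'' hp2)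
  -- assemble
  have h0 : trajCount k θ A B R n ω p = Tset.ncard := by
    rw [← Nat.card_coe_set_eq]
    rfl
  have hA1 : (Qset p.2).ncard ≤ NcountD k E₀ τ₀ R (n+1) :=
    claim2 p.2 (by linarith)
  have hA2 : (Qset (p.2 - s)).ncard ≤ NcountD k E₀ τ₀ R (n+1) :=
    claim2 (p.2 - s) (by
      have := abs_sub p.2 s
      have : |p.2 - s| ≤ |p.2| + |s| := abs_sub _ _
      rw [abs_of_pos hs0] at this
      linarith)
  have hA3 : (Qset (p.2 + s)).ncard ≤ NcountD k E₀ τ₀ R (n+1) :=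
    claim2 (p.2 + s) (by
      have : |p.2 + s| ≤ |p.2| + |s| := abs_add_le _ _
      rw [abs_of_pos hs0] at this
      linarith)
  have hsub : Tset.ncard ≤ (Qset p.2).ncard + (Qset (p.2 - s)).ncard
      + (Qset (p.2 + s)).ncard := by
    calc Tset.ncard ≤ (Qset p.2 ∪ Qset (p.2 - s) ∪ Qset (p.2 + s)).ncard :=
      Set.ncard_le_ncard claim1 (Set.toFinite _)
    _ ≤ (Qset p.2 ∪ Qset (p.2 - s)).ncard + (Qset (p.2 + s)).ncard :=
      Set.ncard_union_le _ _
    _ ≤ (Qset p.2).ncard + (Qset (p.2 - s)).ncard + (Qset (p.2 + s)).ncard := by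
      have := Set.ncard_union_le (Qset p.2) (Qset (p.2 - s))
      omega
  rw [h0]
  omega


set_option maxHeartbeats 1000000
open Function RPE7 MeasureTheory Filter

lemma ae_orbit {Ω : Type*} [MeasurableSpace Ω] (P : Measure Ω) (θ : Ω → Ω)
    (hmp : MeasurePreserving θ P P) {Q : Ω → Prop} (h : ∀ᵐ ω ∂P, Q ω) :
    ∀ᵐ ω ∂P, ∀ i : ℕ, Q (θ^[i] ω) := by
  rw [ae_all_iff]
  intro i
  rw [ae_iff] at h ⊢
  obtain ⟨t, hsub, htm, ht0⟩ := exists_measurable_superset_of_null h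
  refine measure_mono_null (t := θ^[i] ⁻¹' t) (fun ω hω => Set.mem_preimage.mpr (hsub hω)) ?_
  rw [(hmp.iterate i).measure_preimage htm.nullMeasurableSet]
  exact ht0

lemma periodic_deriv' {f : ℝ → ℝ} (hp : ∀ x, f (x + 1) = f x) :
    ∀ x, deriv f (x + 1) = deriv f x := by
  intro x
  have h1 : (fun y => f (y + 1)) = f := funext hp
  calc deriv f (x + 1) = deriv (fun y => f (y + 1)) x := (deriv_comp_add_const f 1 x).symm
  _ = deriv f x := by rw [h1]




end Aux

set_option maxHeartbeats 1000000

theorem stmt7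
    {Ω : Type*} [MeasurableSpace Ω]
    (k : ℕ) (hk : 2 ≤ k)
    (P : Measure Ω) [IsProbabilityMeasure P]
    (θ : Ω → Ω) (hθ : Ergodic θ P) (hθbij : Function.Bijective θ)
    (E τ : ℝ → Ω → ℝ → ℝ) (E₀ τ₀ : ℝ → ℝ)
    (hE0 : ∀ ω, E 0 ω = E₀) (hτ0 : ∀ ω, τ 0 ω = τ₀)
    (hE₀smooth : ContDiff ℝ (⊤ : ℕ∞) E₀) (hE₀lift : ∀ x, E₀ (x + 1) = E₀ x + k)
    (lam0 : ℝ) (hlam0 : 1 < lam0) (hE₀exp : ∀ x, lam0 ≤ deriv E₀ x)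
    (hτ₀smooth : ContDiff ℝ (⊤ : ℕ∞) τ₀) (hτ₀per : Function.Periodic τ₀ 1)
    (hEsmooth : ∀ ε ω, 0 ≤ ε → ContDiff ℝ (⊤ : ℕ∞) (E ε ω))
    (hElift : ∀ ε ω x, E ε ω (x + 1) = E ε ω x + k)
    (hτsmooth : ∀ ε ω, 0 ≤ ε → ContDiff ℝ (⊤ : ℕ∞) (τ ε ω))
    (hτper : ∀ ε ω, Function.Periodic (τ ε ω) 1)
    (hmeasE : ∀ ε x, Measurable fun ω => E ε ω x)
    (hmeasτ : ∀ ε x, Measurable fun ω => τ ε ω x)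
    (ε₀ : ℝ) (hε₀ : 0 < ε₀)
    (hexp : ∀ ε, 0 ≤ ε → ε < ε₀ → ∀ᵐ ω ∂P, ∀ x, (lam0 + 1) / 2 ≤ deriv (E ε ω) x)
    (hconv : ∀ j : ℕ, ∀ δ : ℝ, 0 < δ → ∃ ε' > 0, ∀ ε, 0 ≤ ε → ε < ε' → ∀ᵐ ω ∂P, ∀ x,
      |iteratedDeriv j (E ε ω) x - iteratedDeriv j E₀ x| < δ ∧
      |iteratedDeriv j (τ ε ω) x - iteratedDeriv j τ₀ x| < δ)
    (Cτ : ℝ) (hCτpos : 0 < Cτ)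
    (hCτ : ∀ ε, 0 ≤ ε → ε < ε₀ → ∀ᵐ ω ∂P, ∀ x, |deriv (τ ε ω) x| ≤ Cτ)
    (κ : ℝ) (hκ : κ = ((lam0 + 1) / 2 + 1) / 2)
    (Rκ : ℝ) (hRκ : Cτ / ((lam0 + 1) / 2 - κ) ≤ Rκ)
    (hPC : PartiallyCaptive k E₀ τ₀ Rκ) :
    ∀ δ : ℝ, 0 < δ → ∃ nδ : ℕ, ∀ n : ℕ, nδ ≤ n →
      ∃ εn : ℝ, 0 < εn ∧ εn ≤ ε₀ ∧ ∀ ε, 0 ≤ ε → ε < εn →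
        ∃ b : ℝ, b < δ ∧ ∀ᵐ ω ∂P,
          |Real.log (Ncount k θ (E ε) (τ ε) Rκ n ω) / n| ≤ b := by
  intro δ hδ
  have hlam1 : 1 < (lam0 + 1) / 2 := by linarith
  -- deterministic infrastructure
  have hE₀pack := contDiff_infty_iff_deriv.mp hE₀smooth
  have hE₀d : Differentiable ℝ E₀ := hE₀pack.1
  have hdE₀pack := contDiff_infty_iff_deriv.mp hE₀pack.2
  have hτ₀pack := contDiff_infty_iff_deriv.mp hτ₀smooth
  have hdτ₀pack := contDiff_infty_iff_deriv.mp hτ₀pack.2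
  have hd1per : ∀ x, deriv E₀ (x + 1) = deriv E₀ x := by
    intro x
    have h1 : (fun y => E₀ (y + 1)) = fun y => E₀ y + (k : ℝ) := funext hE₀lift
    calc deriv E₀ (x + 1) = deriv (fun y => E₀ (y + 1)) x := (deriv_comp_add_const E₀ 1 x).symm
    _ = deriv (fun y => E₀ y + (k : ℝ)) x := by rw [h1]
    _ = deriv E₀ x := by simp
  have hd2per := periodic_deriv' hd1per
  have hτ1per : ∀ x, deriv τ₀ (x + 1) = deriv τ₀ x := periodic_deriv' hτ₀per
  have hτ2per := periodic_deriv' hτ1per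
  obtain ⟨Λ, hΛnn, hΛ⟩ := RPE7.periodic_bound hE₀pack.2.continuous hd1per
  have hE₀up : ∀ x, deriv E₀ x ≤ Λ := fun x => le_trans (le_abs_self _) (hΛ x)
  have hΛlam : lam0 ≤ Λ := le_trans (hE₀exp 0) (hE₀up 0)
  obtain ⟨M₁, hM₁0, hM₁⟩ := RPE7.periodic_bound hdE₀pack.2.continuous hd2per
  obtain ⟨M₂, hM₂0, hM₂⟩ := RPE7.periodic_bound hdτ₀pack.2.continuous hτ2per
  have hM0 : 0 ≤ max M₁ M₂ := le_trans hM₁0 (le_max_left _ _)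
  have hLipE : ∀ a b, |deriv E₀ a - deriv E₀ b| ≤ (max M₁ M₂) * |a - b| := fun a b =>
    RPE7.lip_of_deriv hdE₀pack.1 (fun x => le_trans (hM₁ x) (le_max_left _ _)) a b
  have hLipτ : ∀ a b, |deriv τ₀ a - deriv τ₀ b| ≤ (max M₁ M₂) * |a - b| := fun a b =>
    RPE7.lip_of_deriv hdτ₀pack.1 (fun x => le_trans (hM₂ x) (le_max_right _ _)) a b
  have hE₀bij : Function.Bijective E₀ :=
    RPE7.lift_bij hE₀d (by linarith) hE₀exp (by omega) hE₀lift
  haveI : (ae P).NeBot := ae_neBot.mpr (IsProbabilityMeasure.ne_zero P)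
  obtain ⟨ω₀, hω₀⟩ := (hCτ 0 le_rfl hε₀).exists
  have hτ₀b : ∀ x, |deriv τ₀ x| ≤ Cτ := by
    intro x; have h := hω₀ x; rwa [hτ0 ω₀] at h
  -- R facts
  have hκval : (lam0 + 1) / 2 - κ = (lam0 - 1) / 4 := by rw [hκ]; ring
  rw [hκval] at hRκ
  have h4C : 4 * Cτ ≤ (lam0 - 1) * Rκ := by
    have := (div_le_iff₀ (by linarith : (0:ℝ) < (lam0 - 1) / 4)).mp hRκ
    nlinarith
  have hR : 0 < Rκ := by nlinarith
  have hlamR : 2 * Cτ ≤ ((lam0 + 1) / 2 - 1) * Rκ := by nlinarith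
  -- the constant C
  have hC1 : 1 ≤ max 1 ((Λ + 1) + (Rκ + Cτ + 2) * (1 + max M₁ M₂)) := le_max_left _ _
  have hC0 : (Λ + 1) + (Rκ + Cτ + 2) * (1 + max M₁ M₂)
      ≤ max 1 ((Λ + 1) + (Rκ + Cτ + 2) * (1 + max M₁ M₂)) := le_max_right _ _
  set C : ℝ := max 1 ((Λ + 1) + (Rκ + Cτ + 2) * (1 + max M₁ M₂)) with hCdef
  have hCpos : (0:ℝ) < C := lt_of_lt_of_le one_pos hC1
  -- choose nδ
  obtain ⟨n₁, hn₁⟩ := (Metric.tendsto_atTop.mp hPC) (δ / 4) (by linarith)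
  obtain ⟨n₂, hn₂⟩ := exists_nat_gt (Real.log 3 * 4 / δ)
  refine ⟨max n₁ (max n₂ 1), fun n hn => ?_⟩
  have hnn₁ : n₁ ≤ n := le_trans (le_max_left _ _) hn
  have hnn₂ : n₂ ≤ n := le_trans (le_trans (le_max_left _ _) (le_max_right _ _)) hn
  have hn1 : 1 ≤ n := le_trans (le_trans (le_max_right _ _) (le_max_right _ _)) hn
  -- n-dependent smallness
  have hΛpos : (0:ℝ) < Λ := by linarith
  have hρb0 : 0 < min (2 * Rκ) (3 * Cτ) * (lam0 / Λ) ^ n := by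
    have h1 : 0 < min (2 * Rκ) (3 * Cτ) := lt_min (by linarith) (by linarith)
    have h2 : 0 < lam0 / Λ := div_pos (by linarith) hΛpos
    positivity
  set ρb : ℝ := min (2 * Rκ) (3 * Cτ) * (lam0 / Λ) ^ n with hρbdef
  have h2C0 : (0:ℝ) < (2 * C) ^ n := by positivity
  set δ₁ : ℝ := min 1 ρb / (2 * C) ^ n with hδ₁def
  have hδ₁0 : 0 < δ₁ := by
    have : 0 < min 1 ρb := lt_min one_pos hρb0
    positivity
  have hprod : (2 * C) ^ n * δ₁ = min 1 ρb := by
    rw [hδ₁def, mul_comm, div_mul_cancel₀ _ (ne_of_gt h2C0)]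
  have hsm : (2 * C) ^ n * δ₁ ≤ 1 := by rw [hprod]; exact min_le_left _ _
  have hDn : ((2 * C) ^ n - 1) * δ₁ ≤ ρb := by
    have h1 : ((2 * C) ^ n - 1) * δ₁ ≤ (2 * C) ^ n * δ₁ := by nlinarith [hδ₁0.le]
    rw [hprod] at h1
    exact le_trans h1 (min_le_right _ _)
  -- epsilon choice
  obtain ⟨ε₁, hε₁0, hε₁⟩ := hconv 0 δ₁ hδ₁0
  obtain ⟨ε₂, hε₂0, hε₂⟩ := hconv 1 δ₁ hδ₁0
  refine ⟨min ε₀ (min ε₁ ε₂), by positivity, min_le_left _ _, fun ε hε0 hεlt => ?_⟩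
  have hεε₀ : ε < ε₀ := lt_of_lt_of_le hεlt (min_le_left _ _)
  have hεε₁ : ε < ε₁ := lt_of_lt_of_le hεlt (le_trans (min_le_right _ _) (min_le_left _ _))
  have hεε₂ : ε < ε₂ := lt_of_lt_of_le hεlt (le_trans (min_le_right _ _) (min_le_right _ _))
  refine ⟨3 * δ / 4, by linarith, ?_⟩
  -- goodness a.e.
  have hGoodAt : ∀ᵐ ω ∂P, GoodAt (E ε ω) (τ ε ω) E₀ τ₀ ((lam0 + 1) / 2) Cτ δ₁ := by
    filter_upwards [hexp ε hε0 hεε₀, hCτ ε hε0 hεε₀, hε₁ ε hε0 hεε₁, hε₂ ε hε0 hεε₂]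
      with ω h1 h2 h3 h4
    have hd : Differentiable ℝ (E ε ω) := (hEsmooth ε ω hε0).differentiable (by simp)
    refine ⟨hd, RPE7.lift_bij hd (by linarith) h1 (by omega) (hElift ε ω), h1, h2, ?_, ?_, ?_⟩
    · intro x; have h := (h3 x).1; rw [iteratedDeriv_zero, iteratedDeriv_zero] at h; exact h.le
    · intro x; have h := (h4 x).1; rw [iteratedDeriv_one, iteratedDeriv_one] at h; exact h.le
    · intro x; have h := (h4 x).2; rw [iteratedDeriv_one, iteratedDeriv_one] at h; exact h.le
  have hGoodOrb := ae_orbit P θ hθ.toMeasurePreserving hGoodAt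
  filter_upwards [hGoodOrb] with ω hGood
  -- counting bound
  have hcount : Ncount k θ (E ε) (τ ε) Rκ n ω ≤ 3 * NcountD k E₀ τ₀ Rκ (n + 1) := by
    refine Ncount_le k θ (E ε) (τ ε) Rκ (le_of_lt hR) n ω _ (fun p hp => ?_)
    exact count_main k hk θ (E ε) (τ ε) E₀ τ₀ lam0 Λ (max M₁ M₂) ((lam0 + 1) / 2) Cτ Rκ δ₁ C
      hlam0 hδ₁0.le hE₀d hE₀bij hE₀exp hE₀up hLipE hLipτ hτ₀b hM0 hR hCτpos hlam1 hlamR h4C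
      hC1 hC0 n ω hGood hsm hDn p hp
  -- logs
  rcases Nat.eq_zero_or_pos (Ncount k θ (E ε) (τ ε) Rκ n ω) with h0 | h0
  · rw [h0]
    simp only [Nat.cast_zero, Real.log_zero, zero_div, abs_zero]
    linarith
  · have hN1 : 1 ≤ Ncount k θ (E ε) (τ ε) Rκ n ω := h0
    have hND1 : 1 ≤ NcountD k E₀ τ₀ Rκ (n + 1) := by omega
    have hNpos : (0:ℝ) < (Ncount k θ (E ε) (τ ε) Rκ n ω : ℝ) := by exact_mod_cast h0
    have hNDpos : (0:ℝ) < (NcountD k E₀ τ₀ Rκ (n + 1) : ℝ) := by exact_mod_cast hND1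
    have hlog1 : Real.log (Ncount k θ (E ε) (τ ε) Rκ n ω)
        ≤ Real.log 3 + Real.log (NcountD k E₀ τ₀ Rκ (n + 1)) := by
      have hle : ((Ncount k θ (E ε) (τ ε) Rκ n ω : ℕ) : ℝ)
          ≤ 3 * ((NcountD k E₀ τ₀ Rκ (n + 1) : ℕ) : ℝ) := by exact_mod_cast hcount
      calc Real.log (Ncount k θ (E ε) (τ ε) Rκ n ω)
          ≤ Real.log (3 * (NcountD k E₀ τ₀ Rκ (n + 1) : ℝ)) := Real.log_le_log hNpos hle
      _ = _ := Real.log_mul (by norm_num) (ne_of_gt hNDpos)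
    have hdist := hn₁ (n + 1) (by omega)
    rw [Real.dist_eq, sub_zero] at hdist
    have hlog2 : Real.log (NcountD k E₀ τ₀ Rκ (n + 1)) < δ / 4 * ((n:ℝ) + 1) := by
      have h2 := (abs_lt.mp hdist).2
      have hcast : (((n + 1 : ℕ)) : ℝ) = (n:ℝ) + 1 := by push_cast; ring
      rw [hcast] at h2
      rw [div_lt_iff₀ (by positivity : (0:ℝ) < (n:ℝ) + 1)] at h2
      linarith
    have hlog3 : Real.log 3 ≤ δ / 4 * n := by
      rw [div_lt_iff₀ hδ] at hn₂
      have hc : (n₂ : ℝ) ≤ (n : ℝ) := by exact_mod_cast hnn₂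
      nlinarith
    have hnpos : (0:ℝ) < (n:ℝ) := by exact_mod_cast hn1
    have hlogN0 : 0 ≤ Real.log (Ncount k θ (E ε) (τ ε) Rκ n ω) :=
      Real.log_nonneg (by exact_mod_cast hN1)
    rw [abs_of_nonneg (div_nonneg hlogN0 hnpos.le), div_le_iff₀ hnpos]
    have hn1R : (1:ℝ) ≤ (n:ℝ) := by exact_mod_cast hn1
    have hh : δ / 4 * ((n:ℝ) + 1) ≤ δ / 4 * (2 * n) := by nlinarith
    nlinarith

end RPE
end
end

section
/- Let 0 ≤ ε < ε₀, let C_τ satisfy esssup_ω sup_x |τ_ε'(ω,x)| ≤ C_τ, and set C₁ = C_τ Σ_{j=1}^∞ λ^{−j}. Then for each n ∈ ℕ* one has ℙ-almost surely Ñ_{R_κ − C₁}(ε;ω,n) ≤ N(ε;ω,n) ≤ Ñ_{R_κ + C₁}(ε;ω,n). -/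
open MeasureTheory Filter Topology
open scoped ENNReal

noncomputable section

namespace RPE

variable {Ω : Type*}

/-! ### Auxiliary material for Statement 8 -/

section Stmt8Aux

open Function

/-- If `f (y + c) = f y + m` for all `y`, then `deriv f` is invariant under the shift `c`. -/
lemma deriv_eq_of_shift {f : ℝ → ℝ} {c m : ℝ} (h : ∀ y, f (y + c) = f y + m) (x : ℝ) :
    deriv f (x + c) = deriv f x := by
  have h1 : deriv (fun y => f (y + c)) x = deriv f (x + c) := deriv_comp_add_const f c x
  have h2 : (fun y => f (y + c)) = fun y => f y + m := funext h
  rw [h2, deriv_add_const] at h1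
  exact h1.symm

/-- A "nice" expanding lift. -/
structure NiceE (k : ℕ) (lam : ℝ) (f : ℝ → ℝ) : Prop where
  hk : 1 ≤ k
  hlam : 1 < lam
  diff : Differentiable ℝ f
  lift : ∀ x, f (x + 1) = f x + k
  der : ∀ x, lam ≤ deriv f x

/-- A "nice" periodic roof function. -/
structure NiceT (C : ℝ) (g : ℝ → ℝ) : Prop where
  diff : Differentiable ℝ g
  per : Function.Periodic g 1
  der : ∀ x, |deriv g x| ≤ C

namespace NiceE

variable {k : ℕ} {lam : ℝ} {f : ℝ → ℝ}

lemma derpos (hf : NiceE k lam f) (x : ℝ) : 0 < deriv f x :=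
  lt_of_lt_of_le (by linarith [hf.hlam]) (hf.der x)

lemma mono (hf : NiceE k lam f) : StrictMono f := strictMono_of_deriv_pos hf.derpos

lemma hkR (hf : NiceE k lam f) : (1 : ℝ) ≤ (k : ℝ) := by exact_mod_cast hf.hk

lemma lift_nat (hf : NiceE k lam f) (x : ℝ) (m : ℕ) : f (x + m) = f x + k * m := by
  induction m with
  | zero => simp
  | succ m ih =>
    have h1 : (x + (m + 1 : ℕ) : ℝ) = (x + m) + 1 := by push_cast; ring
    rw [h1, hf.lift, ih]; push_cast; ring

lemma lift_nat_sub (hf : NiceE k lam f) (x : ℝ) (m : ℕ) : f (x - m) = f x - k * m := by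
  have := hf.lift_nat (x - m) m
  simp only [sub_add_cancel] at this
  linarith

lemma tendsto_top (hf : NiceE k lam f) : Filter.Tendsto f Filter.atTop Filter.atTop := by
  rw [Filter.tendsto_atTop]
  intro b
  obtain ⟨m, hm⟩ := exists_nat_ge (b - f 0)
  filter_upwards [Filter.eventually_ge_atTop (m : ℝ)] with x hx
  have h1 : f (0 + (m : ℕ)) ≤ f x := hf.mono.monotone (by simpa using hx)
  rw [hf.lift_nat] at h1
  nlinarith [hf.hkR, Nat.cast_nonneg (α := ℝ) m]

lemma tendsto_bot (hf : NiceE k lam f) : Filter.Tendsto f Filter.atBot Filter.atBot := by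
  rw [Filter.tendsto_atBot]
  intro b
  obtain ⟨m, hm⟩ := exists_nat_ge (f 0 - b)
  filter_upwards [Filter.eventually_le_atBot (-(m : ℝ))] with x hx
  have h1 : f x ≤ f (0 - (m : ℕ)) := hf.mono.monotone (by simpa using hx)
  rw [hf.lift_nat_sub] at h1
  nlinarith [hf.hkR, Nat.cast_nonneg (α := ℝ) m]

lemma surj (hf : NiceE k lam f) : Function.Surjective f :=
  hf.diff.continuous.surjective hf.tendsto_top hf.tendsto_bot

lemma inj (hf : NiceE k lam f) : Function.Injective f := hf.mono.injective

lemma rinv (hf : NiceE k lam f) (y : ℝ) : f (Function.invFun f y) = y := Function.invFun_eq (hf.surj y)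

lemma linv (hf : NiceE k lam f) (x : ℝ) : Function.invFun f (f x) = x := hf.inj (hf.rinv (f x))

lemma invFun_mono (hf : NiceE k lam f) : Monotone (Function.invFun f) := by
  intro a b hab
  by_contra hcon
  push_neg at hcon
  have := hf.mono hcon
  rw [hf.rinv, hf.rinv] at this
  exact absurd hab (not_le.2 this)

lemma invFun_surj (hf : NiceE k lam f) : Function.Surjective (Function.invFun f) :=
  fun x => ⟨f x, hf.linv x⟩

lemma cont_invFun (hf : NiceE k lam f) : Continuous (Function.invFun f) :=
  hf.invFun_mono.continuous_of_surjective hf.invFun_surj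

lemma hasDerivAt_invFun (hf : NiceE k lam f) (y : ℝ) :
    HasDerivAt (Function.invFun f) (deriv f (Function.invFun f y))⁻¹ y :=
  HasDerivAt.of_local_left_inverse hf.cont_invFun.continuousAt
    (hf.diff (Function.invFun f y)).hasDerivAt (hf.derpos _).ne'
    (Filter.Eventually.of_forall hf.rinv)

lemma invFun_shift (hf : NiceE k lam f) (y : ℝ) (m : ℕ) :
    Function.invFun f (y + (k : ℝ) * m) = Function.invFun f y + m := by
  apply hf.inj
  rw [hf.lift_nat, hf.rinv, hf.rinv]

lemma deriv_shift (hf : NiceE k lam f) (x : ℝ) (m : ℕ) : deriv f (x + (m : ℝ)) = deriv f x :=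
  deriv_eq_of_shift (fun y => by rw [hf.lift_nat y m]) x

end NiceE

namespace NiceT

variable {C : ℝ} {g : ℝ → ℝ}

lemma per_nat (hg : NiceT C g) (x : ℝ) (m : ℕ) : g (x + m) = g x := by
  induction m with
  | zero => simp
  | succ m ih =>
    have h1 : (x + (m + 1 : ℕ) : ℝ) = (x + m) + 1 := by push_cast; ring
    rw [h1, hg.per (x + m), ih]

lemma deriv_shift (hg : NiceT C g) (x : ℝ) (m : ℕ) : deriv g (x + (m : ℝ)) = deriv g x :=
  deriv_eq_of_shift (fun y => by rw [hg.per_nat y m, add_zero]) x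

end NiceT

section IterGFacts

variable {Ω : Type*} {θ θinv : Ω → Ω} {Eε τε : Ω → ℝ → ℝ} {k : ℕ} {lam Cτ : ℝ}

/-- Forward-orbit goodness. -/
def Fwd (θ : Ω → Ω) (Eε τε : Ω → ℝ → ℝ) (k : ℕ) (lam Cτ : ℝ) (σ : Ω) : Prop :=
  ∀ m : ℕ, NiceE k lam (Eε (θ^[m] σ)) ∧ NiceT Cτ (τε (θ^[m] σ))

namespace Fwd

lemma self {σ : Ω} (h : Fwd θ Eε τε k lam Cτ σ) :
    NiceE k lam (Eε σ) ∧ NiceT Cτ (τε σ) := by simpa using h 0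

lemma step {σ : Ω} (h : Fwd θ Eε τε k lam Cτ σ) : Fwd θ Eε τε k lam Cτ (θ σ) := by
  intro m
  rw [← Function.iterate_succ_apply]
  exact h (m + 1)

lemma iter {σ : Ω} (h : Fwd θ Eε τε k lam Cτ σ) (j : ℕ) :
    Fwd θ Eε τε k lam Cτ (θ^[j] σ) := by
  induction j generalizing σ with
  | zero => simpa using h
  | succ j ih =>
    rw [Function.iterate_succ_apply]
    exact ih h.step

end Fwd

lemma iterG_succ (n : ℕ) (σ : Ω) (x : ℝ) :
    iterG θ Eε (n + 1) σ x = Function.invFun (Eε σ) (iterG θ Eε n (θ σ) x) := rfl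

lemma iterG_zero (σ : Ω) (x : ℝ) : iterG θ Eε 0 σ x = x := rfl

lemma iterG_main (n : ℕ) : ∀ (σ : Ω), Fwd θ Eε τε k lam Cτ σ → ∀ x : ℝ,
    HasDerivAt (iterG θ Eε n σ) (deriv (iterG θ Eε n σ) x) x ∧
    0 < deriv (iterG θ Eε n σ) x ∧ deriv (iterG θ Eε n σ) x ≤ lam⁻¹ ^ n := by
  induction n with
  | zero =>
    intro σ h x
    have hid : iterG θ Eε 0 σ = fun y : ℝ => y := rfl
    rw [hid]
    simp only [deriv_id'']
    exact ⟨hasDerivAt_id x, one_pos, by simp⟩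
  | succ n ih =>
    intro σ h x
    obtain ⟨hd, hpos, hle⟩ := ih (θ σ) h.step x
    have hE : NiceE k lam (Eε σ) := h.self.1
    have hlam : 1 < lam := hE.hlam
    set z := iterG θ Eε n (θ σ) x with hz
    have hinv := hE.hasDerivAt_invFun z
    have hcomp : HasDerivAt (iterG θ Eε (n + 1) σ)
        ((deriv (Eε σ) (Function.invFun (Eε σ) z))⁻¹ * deriv (iterG θ Eε n (θ σ)) x) x :=
      HasDerivAt.comp x hinv hd
    have hder := hcomp.deriv
    have hEpos := hE.derpos (Function.invFun (Eε σ) z)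
    refine ⟨hder ▸ hcomp, ?_, ?_⟩
    · rw [hder]
      exact mul_pos (inv_pos.2 hEpos) hpos
    · rw [hder, pow_succ']
      have h1 : (deriv (Eε σ) (Function.invFun (Eε σ) z))⁻¹ ≤ lam⁻¹ :=
        inv_anti₀ (by linarith) (hE.der _)
      exact mul_le_mul h1 hle hpos.le (inv_nonneg.2 (by linarith))

lemma iterG_hasDerivAt (n : ℕ) {σ : Ω} (h : Fwd θ Eε τε k lam Cτ σ) (x : ℝ) :
    HasDerivAt (iterG θ Eε n σ) (deriv (iterG θ Eε n σ) x) x :=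
  (iterG_main n σ h x).1

lemma iterG_deriv_pos (n : ℕ) {σ : Ω} (h : Fwd θ Eε τε k lam Cτ σ) (x : ℝ) :
    0 < deriv (iterG θ Eε n σ) x :=
  (iterG_main n σ h x).2.1

lemma iterG_deriv_le (n : ℕ) {σ : Ω} (h : Fwd θ Eε τε k lam Cτ σ) (x : ℝ) :
    deriv (iterG θ Eε n σ) x ≤ lam⁻¹ ^ n :=
  (iterG_main n σ h x).2.2

lemma iterG_deriv_succ (n : ℕ) {σ : Ω} (h : Fwd θ Eε τε k lam Cτ σ) (x : ℝ) :
    deriv (iterG θ Eε (n + 1) σ) x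
      = (deriv (Eε σ) (iterG θ Eε (n + 1) σ x))⁻¹ * deriv (iterG θ Eε n (θ σ)) x := by
  have hE : NiceE k lam (Eε σ) := h.self.1
  have hd := iterG_hasDerivAt n h.step x
  have hinv := hE.hasDerivAt_invFun (iterG θ Eε n (θ σ) x)
  have hcomp : HasDerivAt (iterG θ Eε (n + 1) σ)
      ((deriv (Eε σ) (Function.invFun (Eε σ) (iterG θ Eε n (θ σ) x)))⁻¹
        * deriv (iterG θ Eε n (θ σ)) x) x :=
    HasDerivAt.comp x hinv hd
  exact hcomp.deriv

lemma iterG_add (a b : ℕ) : ∀ (σ : Ω) (x : ℝ),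
    iterG θ Eε (a + b) σ x = iterG θ Eε a σ (iterG θ Eε b (θ^[a] σ) x) := by
  induction a with
  | zero => intro σ x; rw [Nat.zero_add]; rfl
  | succ a ih =>
    intro σ x
    have h1 : a + 1 + b = (a + b) + 1 := by omega
    rw [h1, iterG_succ, ih (θ σ) x, Function.iterate_succ_apply]
    rfl

lemma iterG_deriv_add (a b : ℕ) {σ : Ω} (h : Fwd θ Eε τε k lam Cτ σ) (x : ℝ) :
    deriv (iterG θ Eε (a + b) σ) x
      = deriv (iterG θ Eε a σ) (iterG θ Eε b (θ^[a] σ) x)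
        * deriv (iterG θ Eε b (θ^[a] σ)) x := by
  have h1 := iterG_hasDerivAt b (h.iter a) x
  have h2 := iterG_hasDerivAt a h (iterG θ Eε b (θ^[a] σ) x)
  have hcomp := HasDerivAt.comp x h2 h1
  have heq : iterG θ Eε (a + b) σ = (iterG θ Eε a σ) ∘ (iterG θ Eε b (θ^[a] σ)) :=
    funext (iterG_add a b σ)
  rw [heq]
  exact hcomp.deriv

lemma iterG_shift (n : ℕ) : ∀ (σ : Ω), Fwd θ Eε τε k lam Cτ σ → ∀ (x : ℝ) (m : ℕ),
    iterG θ Eε n σ (x + (k : ℝ) ^ n * m) = iterG θ Eε n σ x + m := by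
  induction n with
  | zero => intro σ h x m; simp [iterG_zero]
  | succ n ih =>
    intro σ h x m
    have hE : NiceE k lam (Eε σ) := h.self.1
    have h1 : x + (k : ℝ) ^ (n + 1) * m = x + (k : ℝ) ^ n * ((k * m : ℕ) : ℝ) := by
      push_cast; ring
    rw [iterG_succ, iterG_succ, h1, ih (θ σ) h.step x (k * m)]
    have h2 : (iterG θ Eε n (θ σ) x + ((k * m : ℕ) : ℝ))
        = iterG θ Eε n (θ σ) x + (k : ℝ) * m := by push_cast; ring
    rw [h2, hE.invFun_shift]

lemma iterG_deriv_shift (n : ℕ) {σ : Ω} (h : Fwd θ Eε τε k lam Cτ σ) (x : ℝ) (m : ℕ) :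
    deriv (iterG θ Eε n σ) (x + (k : ℝ) ^ n * m) = deriv (iterG θ Eε n σ) x :=
  deriv_eq_of_shift (fun y => iterG_shift n σ h y m) x

end IterGFacts

section BranchIdentity

variable {Ω : Type*} {θ θinv : Ω → Ω} {Eε τε : Ω → ℝ → ℝ} {k : ℕ} {lam Cτ : ℝ}

lemma canTraj_repr (n : ℕ) : ∀ (σ : Ω), Fwd θ Eε τε k lam Cτ σ → ∀ (α : Fin n → ℕ) (y η : ℝ),
    canTraj θ Eε τε n α σ (y, η) =
      (iterG θ Eε n σ (y + ∑ i : Fin n, (α i : ℝ) * (k : ℝ) ^ (i : ℕ)),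
       (deriv (iterG θ Eε n σ) (y + ∑ i : Fin n, (α i : ℝ) * (k : ℝ) ^ (i : ℕ)))⁻¹ *
         (η + ∑ j ∈ Finset.range n,
           deriv (τε (θ^[n - (j + 1)] σ))
               (iterG θ Eε (j + 1) (θ^[n - (j + 1)] σ)
                 (y + ∑ i : Fin n, (α i : ℝ) * (k : ℝ) ^ (i : ℕ)))
             * deriv (iterG θ Eε (j + 1) (θ^[n - (j + 1)] σ))
                 (y + ∑ i : Fin n, (α i : ℝ) * (k : ℝ) ^ (i : ℕ)))) := by
  induction n with
  | zero =>
    intro σ h α y η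
    have hid : iterG θ Eε 0 σ = fun y : ℝ => y := rfl
    have hct : canTraj θ Eε τε 0 α σ (y, η) = (y, η) := rfl
    rw [hct, hid]
    simp
  | succ n ih =>
    intro σ h α y η
    have hfθ := h.step
    have hE : NiceE k lam (Eε σ) := h.self.1
    set Afull : ℝ := ∑ i : Fin (n + 1), (α i : ℝ) * (k : ℝ) ^ (i : ℕ) with hAfull
    set A' : ℝ := ∑ i : Fin n, ((α i.castSucc : ℝ) * (k : ℝ) ^ (i : ℕ)) with hA'
    set a : ℕ := α (Fin.last n) with ha
    have hsum : Afull = A' + (k : ℝ) ^ n * a := by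
      rw [hAfull, hA', ha, Fin.sum_univ_castSucc]
      simp only [Fin.coe_castSucc, Fin.val_last]
      ring
    have hyA : y + Afull = (y + A') + (k : ℝ) ^ n * a := by rw [hsum]; ring
    have key := ih (θ σ) hfθ (fun i => α i.castSucc) y η
    have hct : canTraj θ Eε τε (n + 1) α σ (y, η)
        = canMap (Eε σ) (τε σ) a
            (canTraj θ Eε τε n (fun i => α i.castSucc) (θ σ) (y, η)) := rfl
    have shift1 : iterG θ Eε n (θ σ) (y + Afull) = iterG θ Eε n (θ σ) (y + A') + a := by
      rw [hyA]; exact iterG_shift n (θ σ) hfθ (y + A') a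
    have shiftD : deriv (iterG θ Eε n (θ σ)) (y + Afull)
        = deriv (iterG θ Eε n (θ σ)) (y + A') := by
      rw [hyA]; exact iterG_deriv_shift n hfθ (y + A') a
    have hfirst : Function.invFun (Eε σ) (iterG θ Eε n (θ σ) (y + A') + (a : ℝ))
        = iterG θ Eε (n + 1) σ (y + Afull) := by
      rw [iterG_succ, shift1]
    set X := iterG θ Eε (n + 1) σ (y + Afull) with hX
    set Dtop := deriv (iterG θ Eε n (θ σ)) (y + A') with hDtop
    set Dsucc := deriv (iterG θ Eε (n + 1) σ) (y + Afull) with hDsucc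
    have hEXpos : 0 < deriv (Eε σ) X := hE.derpos X
    have hDtop_pos : 0 < Dtop := iterG_deriv_pos n hfθ _
    have hDsucc_eq : Dsucc = (deriv (Eε σ) X)⁻¹ * Dtop := by
      rw [hDsucc, iterG_deriv_succ n h (y + Afull), ← hX, shiftD]
    have hterm : ∀ j ∈ Finset.range n,
        deriv (τε (θ^[n - (j + 1)] (θ σ)))
            (iterG θ Eε (j + 1) (θ^[n - (j + 1)] (θ σ)) (y + A'))
          * deriv (iterG θ Eε (j + 1) (θ^[n - (j + 1)] (θ σ))) (y + A')
        = deriv (τε (θ^[n + 1 - (j + 1)] σ))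
            (iterG θ Eε (j + 1) (θ^[n + 1 - (j + 1)] σ) (y + Afull))
          * deriv (iterG θ Eε (j + 1) (θ^[n + 1 - (j + 1)] σ)) (y + Afull) := by
      intro j hj
      have hjn : j < n := Finset.mem_range.1 hj
      have hbase : θ^[n + 1 - (j + 1)] σ = θ^[n - (j + 1)] (θ σ) := by
        rw [← Function.iterate_succ_apply]
        congr 1
        omega
      rw [hbase]
      set σ' := θ^[n - (j + 1)] (θ σ) with hσ'
      have hfσ' : Fwd θ Eε τε k lam Cτ σ' := hfθ.iter _
      have hc : y + Afull = (y + A') + (k : ℝ) ^ (j + 1) * ((k ^ (n - (j + 1)) * a : ℕ) : ℝ) := by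
        rw [hyA]
        push_cast
        rw [← mul_assoc, ← pow_add]
        congr 3
        omega
      have hval : iterG θ Eε (j + 1) σ' (y + Afull)
          = iterG θ Eε (j + 1) σ' (y + A') + ((k ^ (n - (j + 1)) * a : ℕ) : ℝ) := by
        rw [hc]; exact iterG_shift (j + 1) σ' hfσ' (y + A') _
      have hder2 : deriv (iterG θ Eε (j + 1) σ') (y + Afull)
          = deriv (iterG θ Eε (j + 1) σ') (y + A') := by
        rw [hc]; exact iterG_deriv_shift (j + 1) hfσ' (y + A') _
      have hτσ' : NiceT Cτ (τε σ') := hfσ'.self.2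
      rw [hval, hder2, hτσ'.deriv_shift]
    have hlast : deriv (τε (θ^[n + 1 - (n + 1)] σ))
          (iterG θ Eε (n + 1) (θ^[n + 1 - (n + 1)] σ) (y + Afull))
        * deriv (iterG θ Eε (n + 1) (θ^[n + 1 - (n + 1)] σ)) (y + Afull)
        = deriv (τε σ) X * Dsucc := by
      simp only [Nat.sub_self, Function.iterate_zero, id_eq]
      try rw [← hX]
      try rw [← hDsucc]
    rw [hct, key]
    have hcm : canMap (Eε σ) (τε σ) a
        (iterG θ Eε n (θ σ) (y + A'),
          Dtop⁻¹ * (η + ∑ j ∈ Finset.range n,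
            deriv (τε (θ^[n - (j + 1)] (θ σ)))
                (iterG θ Eε (j + 1) (θ^[n - (j + 1)] (θ σ)) (y + A'))
              * deriv (iterG θ Eε (j + 1) (θ^[n - (j + 1)] (θ σ))) (y + A')))
        = (X, deriv (Eε σ) X * (Dtop⁻¹ * (η + ∑ j ∈ Finset.range n,
            deriv (τε (θ^[n - (j + 1)] (θ σ)))
                (iterG θ Eε (j + 1) (θ^[n - (j + 1)] (θ σ)) (y + A'))
              * deriv (iterG θ Eε (j + 1) (θ^[n - (j + 1)] (θ σ))) (y + A')))
            + deriv (τε σ) X) := by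
      simp only [canMap, hfirst]
    rw [hcm]
    refine Prod.ext rfl ?_
    simp only
    rw [Finset.sum_congr rfl hterm, Finset.sum_range_succ, hlast, hDsucc_eq]
    have he : deriv (Eε σ) X ≠ 0 := hEXpos.ne'
    have hD : Dtop ≠ 0 := hDtop_pos.ne'
    field_simp
    ring

end BranchIdentity
section StableSFacts

variable {Ω : Type*} {θ θinv : Ω → Ω} {Eε τε : Ω → ℝ → ℝ} {k : ℕ} {lam Cτ : ℝ}

lemma mix1 (hθinv₂ : Function.RightInverse θinv θ) {m j : ℕ} (h : j ≤ m) (x : Ω) :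
    θ^[m] (θinv^[j] x) = θ^[m - j] x := by
  conv_lhs => rw [show m = (m - j) + j by omega]
  rw [Function.iterate_add_apply]
  congr 1
  exact (hθinv₂.iterate j) x

lemma mix2 (hθinv₂ : Function.RightInverse θinv θ) {m j : ℕ} (h : m ≤ j) (x : Ω) :
    θ^[m] (θinv^[j] x) = θinv^[j - m] x := by
  conv_lhs => rw [show j = m + (j - m) by omega, Function.iterate_add_apply]
  exact (hθinv₂.iterate m) _

lemma mix3 (hθinv₁ : Function.LeftInverse θinv θ) {m j : ℕ} (h : m ≤ j) (x : Ω) :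
    θinv^[m] (θ^[j] x) = θ^[j - m] x := by
  conv_lhs => rw [show j = m + (j - m) by omega, Function.iterate_add_apply]
  exact (hθinv₁.iterate m) _

lemma mix4 (hθinv₁ : Function.LeftInverse θinv θ) {m j : ℕ} (h : j ≤ m) (x : Ω) :
    θinv^[m] (θ^[j] x) = θinv^[m - j] x := by
  conv_lhs => rw [show m = (m - j) + j by omega]
  rw [Function.iterate_add_apply]
  congr 1
  exact (hθinv₁.iterate j) x

/-- Two-sided orbit goodness. -/
def Good2 (θ θinv : Ω → Ω) (Eε τε : Ω → ℝ → ℝ) (k : ℕ) (lam Cτ : ℝ) (ω : Ω) : Prop :=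
  (∀ m : ℕ, NiceE k lam (Eε (θ^[m] ω)) ∧ NiceT Cτ (τε (θ^[m] ω))) ∧
  (∀ m : ℕ, NiceE k lam (Eε (θinv^[m] ω)) ∧ NiceT Cτ (τε (θinv^[m] ω)))

namespace Good2

variable {ω : Ω}

lemma fwd_fwd (hG : Good2 θ θinv Eε τε k lam Cτ ω) (j : ℕ) :
    Fwd θ Eε τε k lam Cτ (θ^[j] ω) := by
  intro m
  rw [← Function.iterate_add_apply]
  exact hG.1 (m + j)

lemma fwd_bwd (hG : Good2 θ θinv Eε τε k lam Cτ ω)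
    (hθinv₂ : Function.RightInverse θinv θ) (j : ℕ) :
    Fwd θ Eε τε k lam Cτ (θinv^[j] ω) := by
  intro m
  rcases le_or_gt j m with hjm | hmj
  · rw [mix1 hθinv₂ hjm]
    exact hG.1 (m - j)
  · rw [mix2 hθinv₂ hmj.le]
    exact hG.2 (j - m)

lemma fwd_self (hG : Good2 θ θinv Eε τε k lam Cτ ω) : Fwd θ Eε τε k lam Cτ ω := by
  have := hG.fwd_fwd 0
  simpa using this

lemma hlam (hG : Good2 θ θinv Eε τε k lam Cτ ω) : 1 < lam := (hG.1 0).1.hlam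

lemma hCτ0 (hG : Good2 θ θinv Eε τε k lam Cτ ω) : 0 ≤ Cτ :=
  le_trans (abs_nonneg _) ((hG.1 0).2.der 0)

end Good2

lemma geom_summable {lam : ℝ} (hlam : 1 < lam) (c : ℝ) :
    Summable (fun j : ℕ => c * lam⁻¹ ^ (j + 1)) := by
  have hr0 : (0 : ℝ) ≤ lam⁻¹ := inv_nonneg.2 (by linarith)
  have hr1 : lam⁻¹ < 1 := inv_lt_one_of_one_lt₀ hlam
  have hgeom : Summable (fun j : ℕ => lam⁻¹ ^ j) := summable_geometric_of_lt_one hr0 hr1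
  have := hgeom.mul_left (c * lam⁻¹)
  refine this.congr fun j => ?_
  rw [pow_succ]
  ring

/-- Main decomposition of `η - S` along the invariant section. -/
lemma eta_sub_stableS
    (hθinv₁ : Function.LeftInverse θinv θ) (hθinv₂ : Function.RightInverse θinv θ)
    {ω : Ω} (hG : Good2 θ θinv Eε τε k lam Cτ ω) (n : ℕ) (x η : ℝ) :
    ∃ T : ℝ,
      η - stableS θ θinv Eε τε (θ^[n] ω) x
        = (η + ∑ j ∈ Finset.range n,
            deriv (τε (θ^[n - (j + 1)] ω)) (iterG θ Eε (j + 1) (θ^[n - (j + 1)] ω) x)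
              * deriv (iterG θ Eε (j + 1) (θ^[n - (j + 1)] ω)) x) + T
      ∧ |T| ≤ (Cτ * ∑' j : ℕ, lam⁻¹ ^ (j + 1)) * deriv (iterG θ Eε n ω) x := by
  have hlam := hG.hlam
  have hCτ0 := hG.hCτ0
  set σn := θ^[n] ω with hσn
  set s : ℕ → ℝ := fun j =>
    deriv (τε (θinv^[j + 1] σn)) (iterG θ Eε (j + 1) (θinv^[j + 1] σn) x)
      * deriv (iterG θ Eε (j + 1) (θinv^[j + 1] σn)) x with hsdef
  have hs : stableS θ θinv Eε τε σn x = -∑' j, s j := rfl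
  have hfσ : ∀ j : ℕ, Fwd θ Eε τε k lam Cτ (θinv^[j + 1] σn) := by
    intro j
    rcases le_or_gt (j + 1) n with hle | hgt
    · rw [hσn, mix3 hθinv₁ hle]
      exact hG.fwd_fwd _
    · rw [hσn, mix4 hθinv₁ (by omega)]
      exact hG.fwd_bwd hθinv₂ _
  have hb : ∀ j : ℕ, |s j| ≤ Cτ * lam⁻¹ ^ (j + 1) := by
    intro j
    have h1 := (hfσ j).self.2.der (iterG θ Eε (j + 1) (θinv^[j + 1] σn) x)
    have h2 := iterG_deriv_pos (j + 1) (hfσ j) x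
    have h3 := iterG_deriv_le (j + 1) (hfσ j) x
    rw [hsdef]
    simp only
    rw [abs_mul, abs_of_pos h2]
    exact mul_le_mul h1 h3 h2.le hCτ0
  have hg := geom_summable hlam Cτ
  have hsummable : Summable s :=
    Summable.of_norm_bounded hg (by simpa [Real.norm_eq_abs] using hb)
  have hsplit : ∑' j, s j = (∑ j ∈ Finset.range n, s j) + ∑' j, s (j + n) :=
    (Summable.sum_add_tsum_nat_add n hsummable).symm
  have hfin : ∀ j ∈ Finset.range n, s j
      = deriv (τε (θ^[n - (j + 1)] ω)) (iterG θ Eε (j + 1) (θ^[n - (j + 1)] ω) x)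
          * deriv (iterG θ Eε (j + 1) (θ^[n - (j + 1)] ω)) x := by
    intro j hj
    have hjn : j < n := Finset.mem_range.1 hj
    rw [hsdef]
    simp only
    rw [hσn, mix3 hθinv₁ (by omega)]
  set Dn := deriv (iterG θ Eε n ω) x with hDn
  have hDnpos : 0 < Dn := iterG_deriv_pos n hG.fwd_self x
  have htail_b : ∀ j : ℕ, |s (j + n)| ≤ Cτ * lam⁻¹ ^ (j + 1) * Dn := by
    intro j
    have hbase : θinv^[j + n + 1] σn = θinv^[j + 1] ω := by
      rw [hσn, mix4 hθinv₁ (by omega)]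
      congr 1
      omega
    have hfσ' : Fwd θ Eε τε k lam Cτ (θinv^[j + 1] ω) := hG.fwd_bwd hθinv₂ _
    have hidx : j + n + 1 = (j + 1) + n := by omega
    have hθid : θ^[j + 1] (θinv^[j + 1] ω) = ω := (hθinv₂.iterate (j + 1)) ω
    have hdecomp : deriv (iterG θ Eε (j + n + 1) (θinv^[j + 1] ω)) x
        = deriv (iterG θ Eε (j + 1) (θinv^[j + 1] ω)) (iterG θ Eε n ω x) * Dn := by
      rw [hidx, iterG_deriv_add (j + 1) n hfσ', hθid, hDn]
    have hval : iterG θ Eε (j + n + 1) (θinv^[j + 1] ω) x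
        = iterG θ Eε (j + 1) (θinv^[j + 1] ω) (iterG θ Eε n ω x) := by
      rw [hidx, iterG_add (j + 1) n, hθid]
    have h1 := hfσ'.self.2.der (iterG θ Eε (j + 1) (θinv^[j + 1] ω) (iterG θ Eε n ω x))
    have h2 := iterG_deriv_pos (j + 1) hfσ' (iterG θ Eε n ω x)
    have h3 := iterG_deriv_le (j + 1) hfσ' (iterG θ Eε n ω x)
    have hsj : s (j + n)
        = deriv (τε (θinv^[j + 1] ω)) (iterG θ Eε (j + 1) (θinv^[j + 1] ω) (iterG θ Eε n ω x))
          * (deriv (iterG θ Eε (j + 1) (θinv^[j + 1] ω)) (iterG θ Eε n ω x) * Dn) := by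
      rw [hsdef]
      simp only
      rw [show j + n + 1 = (j + n) + 1 from rfl] at hbase hdecomp hval
      rw [hbase, hdecomp, hval]
    rw [hsj, abs_mul, abs_mul, abs_of_pos h2, abs_of_pos hDnpos, ← mul_assoc]
    have : |deriv (τε (θinv^[j + 1] ω))
        (iterG θ Eε (j + 1) (θinv^[j + 1] ω) (iterG θ Eε n ω x))|
          * deriv (iterG θ Eε (j + 1) (θinv^[j + 1] ω)) (iterG θ Eε n ω x)
        ≤ Cτ * lam⁻¹ ^ (j + 1) := mul_le_mul h1 h3 h2.le hCτ0
    exact mul_le_mul_of_nonneg_right this hDnpos.le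
  have htail_sum : Summable (fun j => s (j + n)) := (summable_nat_add_iff n).2 hsummable
  refine ⟨∑' j, s (j + n), ?_, ?_⟩
  · rw [show stableS θ θinv Eε τε σn x = -∑' j, s j from rfl, hsplit,
      Finset.sum_congr rfl hfin]
    ring
  · have habs : |∑' j, s (j + n)| ≤ ∑' j, |s (j + n)| := by
      have h := norm_tsum_le_tsum_norm (f := fun j => s (j + n))
        (by simpa [Real.norm_eq_abs] using htail_sum.abs)
      simpa [Real.norm_eq_abs] using h
    have hle2 : ∑' j, |s (j + n)| ≤ ∑' j, Cτ * lam⁻¹ ^ (j + 1) * Dn :=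
      Summable.tsum_le_tsum htail_b htail_sum.abs (hg.mul_right Dn |>.congr fun j => by ring)
    have heq : ∑' j : ℕ, Cτ * lam⁻¹ ^ (j + 1) * Dn = (Cτ * ∑' j : ℕ, lam⁻¹ ^ (j + 1)) * Dn := by
      rw [tsum_mul_right, ← tsum_mul_left]
    calc |∑' j, s (j + n)| ≤ ∑' j, |s (j + n)| := habs
      _ ≤ ∑' j, Cτ * lam⁻¹ ^ (j + 1) * Dn := hle2
      _ = (Cτ * ∑' j : ℕ, lam⁻¹ ^ (j + 1)) * Dn := heq

/-- A priori bound on the invariant section. -/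
lemma stableS_abs_le
    (hθinv₁ : Function.LeftInverse θinv θ) (hθinv₂ : Function.RightInverse θinv θ)
    {ω : Ω} (hG : Good2 θ θinv Eε τε k lam Cτ ω) (n : ℕ) (x : ℝ) :
    |stableS θ θinv Eε τε (θ^[n] ω) x| ≤ Cτ * ∑' j : ℕ, lam⁻¹ ^ (j + 1) := by
  have hlam := hG.hlam
  have hCτ0 := hG.hCτ0
  set σn := θ^[n] ω with hσn
  set s : ℕ → ℝ := fun j =>
    deriv (τε (θinv^[j + 1] σn)) (iterG θ Eε (j + 1) (θinv^[j + 1] σn) x)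
      * deriv (iterG θ Eε (j + 1) (θinv^[j + 1] σn)) x with hsdef
  have hs : stableS θ θinv Eε τε σn x = -∑' j, s j := rfl
  have hfσ : ∀ j : ℕ, Fwd θ Eε τε k lam Cτ (θinv^[j + 1] σn) := by
    intro j
    rcases le_or_gt (j + 1) n with hle | hgt
    · rw [hσn, mix3 hθinv₁ hle]
      exact hG.fwd_fwd _
    · rw [hσn, mix4 hθinv₁ (by omega)]
      exact hG.fwd_bwd hθinv₂ _
  have hb : ∀ j : ℕ, |s j| ≤ Cτ * lam⁻¹ ^ (j + 1) := by
    intro j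
    have h1 := (hfσ j).self.2.der (iterG θ Eε (j + 1) (θinv^[j + 1] σn) x)
    have h2 := iterG_deriv_pos (j + 1) (hfσ j) x
    have h3 := iterG_deriv_le (j + 1) (hfσ j) x
    rw [hsdef]
    simp only
    rw [abs_mul, abs_of_pos h2]
    exact mul_le_mul h1 h3 h2.le hCτ0
  have hg := geom_summable hlam Cτ
  have hsummable : Summable s :=
    Summable.of_norm_bounded hg (by simpa [Real.norm_eq_abs] using hb)
  have habs : |∑' j, s j| ≤ ∑' j, |s j| := by
    have h := norm_tsum_le_tsum_norm (f := s)
      (by simpa [Real.norm_eq_abs] using hsummable.abs)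
    simpa [Real.norm_eq_abs] using h
  have hle2 : ∑' j, |s j| ≤ ∑' j, Cτ * lam⁻¹ ^ (j + 1) :=
    Summable.tsum_le_tsum hb hsummable.abs hg
  rw [hs, abs_neg]
  calc |∑' j, s j| ≤ ∑' j, |s j| := habs
    _ ≤ ∑' j, Cτ * lam⁻¹ ^ (j + 1) := hle2
    _ = Cτ * ∑' j : ℕ, lam⁻¹ ^ (j + 1) := by rw [tsum_mul_left]

end StableSFacts

section Counting

variable {Ω : Type*} {θ θinv : Ω → Ω} {Eε τε : Ω → ℝ → ℝ} {k : ℕ} {lam Cτ : ℝ}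

lemma point_key
    (hθinv₁ : Function.LeftInverse θinv θ) (hθinv₂ : Function.RightInverse θinv θ)
    {ω : Ω} (hG : Good2 θ θinv Eε τε k lam Cτ ω) (n : ℕ) (p : ℝ × ℝ) (α : Fin n → Fin k) :
    ∃ T : ℝ,
      p.2 - stableS θ θinv Eε τε (θ^[n] ω) (p.1 + ((finFunctionFinEquiv α : ℕ) : ℝ))
        = deriv (iterG θ Eε n ω) (p.1 + ((finFunctionFinEquiv α : ℕ) : ℝ))
            * (canTraj θ Eε τε n (fun i => (α i : ℕ)) ω p).2 + T
      ∧ |T| ≤ (Cτ * ∑' j : ℕ, lam⁻¹ ^ (j + 1))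
              * deriv (iterG θ Eε n ω) (p.1 + ((finFunctionFinEquiv α : ℕ) : ℝ)) := by
  have hx : p.1 + ((finFunctionFinEquiv α : ℕ) : ℝ)
      = p.1 + ∑ i : Fin n, (((fun i => (α i : ℕ)) i : ℕ) : ℝ) * (k : ℝ) ^ (i : ℕ) := by
    rw [finFunctionFinEquiv_apply]
    push_cast
    ring
  set x := p.1 + ((finFunctionFinEquiv α : ℕ) : ℝ) with hxdef
  obtain ⟨T, hT1, hT2⟩ := eta_sub_stableS hθinv₁ hθinv₂ hG n x p.2
  have hrep := canTraj_repr n ω hG.fwd_self (fun i => (α i : ℕ)) p.1 p.2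
  rw [← hx] at hrep
  have hu : (canTraj θ Eε τε n (fun i => (α i : ℕ)) ω p).2
      = (deriv (iterG θ Eε n ω) x)⁻¹
          * (p.2 + ∑ j ∈ Finset.range n,
              deriv (τε (θ^[n - (j + 1)] ω)) (iterG θ Eε (j + 1) (θ^[n - (j + 1)] ω) x)
                * deriv (iterG θ Eε (j + 1) (θ^[n - (j + 1)] ω)) x) :=
    congrArg Prod.snd hrep
  have hDpos : 0 < deriv (iterG θ Eε n ω) x := iterG_deriv_pos n hG.fwd_self x
  have hDu : deriv (iterG θ Eε n ω) x * (canTraj θ Eε τε n (fun i => (α i : ℕ)) ω p).2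
      = p.2 + ∑ j ∈ Finset.range n,
          deriv (τε (θ^[n - (j + 1)] ω)) (iterG θ Eε (j + 1) (θ^[n - (j + 1)] ω) x)
            * deriv (iterG θ Eε (j + 1) (θ^[n - (j + 1)] ω)) x := by
    rw [hu, ← mul_assoc, mul_inv_cancel₀ hDpos.ne', one_mul]
  refine ⟨T, ?_, hT2⟩
  rw [hDu]
  exact hT1

lemma Rkappa_nonneg {Rκ C1 : ℝ} (hC1 : 0 ≤ C1) (hR : 2 * C1 ≤ Rκ) : 0 ≤ Rκ := by linarith

lemma det_main
    (hθinv₁ : Function.LeftInverse θinv θ) (hθinv₂ : Function.RightInverse θinv θ)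
    {ω : Ω} (hG : Good2 θ θinv Eε τε k lam Cτ ω) (n : ℕ) (Rκ : ℝ)
    (hR : 2 * (Cτ * ∑' j : ℕ, lam⁻¹ ^ (j + 1)) ≤ Rκ) :
    tilN k θ θinv Eε τε (Rκ - Cτ * ∑' j : ℕ, lam⁻¹ ^ (j + 1)) n ω
      ≤ Ncount k θ Eε τε Rκ n ω ∧
    Ncount k θ Eε τε Rκ n ω
      ≤ tilN k θ θinv Eε τε (Rκ + Cτ * ∑' j : ℕ, lam⁻¹ ^ (j + 1)) n ω := by
  have hlam := hG.hlam
  have hCτ0 := hG.hCτ0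
  set C1 : ℝ := Cτ * ∑' j : ℕ, lam⁻¹ ^ (j + 1) with hC1def
  have htsum0 : 0 ≤ ∑' j : ℕ, lam⁻¹ ^ (j + 1) :=
    tsum_nonneg fun j => pow_nonneg (inv_nonneg.2 (by linarith)) _
  have hC1nonneg : 0 ≤ C1 := mul_nonneg hCτ0 htsum0
  have hRκ0 : 0 ≤ Rκ := by linarith
  -- pointwise implications
  have hDle1 : ∀ x : ℝ, deriv (iterG θ Eε n ω) x ≤ 1 := by
    intro x
    refine le_trans (iterG_deriv_le n hG.fwd_self x) ?_
    exact pow_le_one₀ (inv_nonneg.2 (by linarith)) (inv_le_one_of_one_le₀ hlam.le)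
  have himp1 : ∀ (p : ℝ × ℝ) (α : Fin n → Fin k),
      |p.2 - stableS θ θinv Eε τε (θ^[n] ω) (p.1 + ((finFunctionFinEquiv α : ℕ) : ℝ))|
        ≤ (Rκ - C1) * deriv (iterG θ Eε n ω) (p.1 + ((finFunctionFinEquiv α : ℕ) : ℝ)) →
      |(canTraj θ Eε τε n (fun i => (α i : ℕ)) ω p).2| ≤ Rκ := by
    intro p α hcond
    obtain ⟨T, h1, h2⟩ := point_key hθinv₁ hθinv₂ hG n p α
    set x := p.1 + ((finFunctionFinEquiv α : ℕ) : ℝ)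
    set D := deriv (iterG θ Eε n ω) x with hD
    have hDpos : 0 < D := iterG_deriv_pos n hG.fwd_self x
    set u := (canTraj θ Eε τε n (fun i => (α i : ℕ)) ω p).2
    have hDu : |D * u| ≤ Rκ * D := by
      have : D * u = (p.2 - stableS θ θinv Eε τε (θ^[n] ω) x) - T := by rw [h1]; ring
      rw [this]
      calc |(p.2 - stableS θ θinv Eε τε (θ^[n] ω) x) - T|
          ≤ |p.2 - stableS θ θinv Eε τε (θ^[n] ω) x| + |T| := abs_sub _ _
        _ ≤ (Rκ - C1) * D + C1 * D := add_le_add hcond h2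
        _ = Rκ * D := by ring
    rw [abs_mul, abs_of_pos hDpos, mul_comm Rκ D] at hDu
    exact le_of_mul_le_mul_left (by linarith [hDu]) hDpos
  have himp3 : ∀ (p : ℝ × ℝ) (α : Fin n → Fin k),
      |p.2 - stableS θ θinv Eε τε (θ^[n] ω) (p.1 + ((finFunctionFinEquiv α : ℕ) : ℝ))|
        ≤ (Rκ - C1) * deriv (iterG θ Eε n ω) (p.1 + ((finFunctionFinEquiv α : ℕ) : ℝ)) →
      |p.2| ≤ Rκ := by
    intro p α hcond
    set x := p.1 + ((finFunctionFinEquiv α : ℕ) : ℝ)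
    set D := deriv (iterG θ Eε n ω) x with hD
    have hDpos : 0 < D := iterG_deriv_pos n hG.fwd_self x
    have hS := stableS_abs_le hθinv₁ hθinv₂ hG n x
    have hD1 : D ≤ 1 := hDle1 x
    have h1 : |p.2| ≤ |p.2 - stableS θ θinv Eε τε (θ^[n] ω) x|
        + |stableS θ θinv Eε τε (θ^[n] ω) x| := by
      have := abs_sub (p.2 - stableS θ θinv Eε τε (θ^[n] ω) x)
          (-(stableS θ θinv Eε τε (θ^[n] ω) x))
      simpa [sub_neg_eq_add, abs_neg] using abs_add_le (p.2 - stableS θ θinv Eε τε (θ^[n] ω) x)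
        (stableS θ θinv Eε τε (θ^[n] ω) x) |>.trans_eq' (by ring_nf)
    have h2 : (Rκ - C1) * D ≤ Rκ - C1 := by nlinarith
    calc |p.2| ≤ |p.2 - stableS θ θinv Eε τε (θ^[n] ω) x|
        + |stableS θ θinv Eε τε (θ^[n] ω) x| := h1
      _ ≤ (Rκ - C1) * D + C1 := add_le_add hcond hS
      _ ≤ Rκ := by linarith
  have himp2 : ∀ (p : ℝ × ℝ) (α : Fin n → Fin k),
      |(canTraj θ Eε τε n (fun i => (α i : ℕ)) ω p).2| ≤ Rκ →
      |p.2 - stableS θ θinv Eε τε (θ^[n] ω) (p.1 + ((finFunctionFinEquiv α : ℕ) : ℝ))|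
        ≤ (Rκ + C1) * deriv (iterG θ Eε n ω) (p.1 + ((finFunctionFinEquiv α : ℕ) : ℝ)) := by
    intro p α hcond
    obtain ⟨T, h1, h2⟩ := point_key hθinv₁ hθinv₂ hG n p α
    set x := p.1 + ((finFunctionFinEquiv α : ℕ) : ℝ)
    set D := deriv (iterG θ Eε n ω) x with hD
    have hDpos : 0 < D := iterG_deriv_pos n hG.fwd_self x
    set u := (canTraj θ Eε τε n (fun i => (α i : ℕ)) ω p).2
    calc |p.2 - stableS θ θinv Eε τε (θ^[n] ω) x| = |D * u + T| := by rw [h1]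
      _ ≤ |D * u| + |T| := abs_add_le _ _
      _ ≤ D * Rκ + C1 * D := by
          refine add_le_add ?_ h2
          rw [abs_mul, abs_of_pos hDpos]
          exact mul_le_mul_of_nonneg_left hcond hDpos.le
      _ = (Rκ + C1) * D := by ring
  -- cardinality comparisons
  have card1 : ∀ p : ℝ × ℝ,
      tilACard k θ θinv Eε τε (Rκ - C1) n ω p ≤ trajCount k θ Eε τε Rκ n ω p := by
    intro p
    unfold tilACard trajCount
    refine Nat.card_le_card_of_injective
      (fun a => ⟨finFunctionFinEquiv.symm a.1, by
        have := himp1 p (finFunctionFinEquiv.symm a.1)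
        rw [Equiv.apply_symm_apply] at this
        exact this a.2⟩) ?_
    intro a b hab
    have hval := congrArg Subtype.val hab
    simp only at hval
    exact Subtype.ext (finFunctionFinEquiv.symm.injective hval)
  have card2 : ∀ p : ℝ × ℝ,
      trajCount k θ Eε τε Rκ n ω p ≤ tilACard k θ θinv Eε τε (Rκ + C1) n ω p := by
    intro p
    unfold tilACard trajCount
    refine Nat.card_le_card_of_injective
      (fun α => ⟨finFunctionFinEquiv α.1, himp2 p α.1 α.2⟩) ?_
    intro a b hab
    have hval := congrArg Subtype.val hab
    simp only at hval
    exact Subtype.ext (finFunctionFinEquiv.injective hval)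
  -- uniform bounds
  have boundT : ∀ p : ℝ × ℝ, trajCount k θ Eε τε Rκ n ω p ≤ k ^ n := by
    intro p
    unfold trajCount
    calc Nat.card _ ≤ Nat.card (Fin (k ^ n)) :=
          Nat.card_le_card_of_injective (fun α => finFunctionFinEquiv α.1)
            (fun a b hab => Subtype.ext (finFunctionFinEquiv.injective hab))
      _ = k ^ n := by simp
  have boundA : ∀ (R : ℝ) (p : ℝ × ℝ), tilACard k θ θinv Eε τε R n ω p ≤ k ^ n := by
    intro R p
    unfold tilACard
    calc Nat.card _ ≤ Nat.card (Fin (k ^ n)) :=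
          Nat.card_le_card_of_injective (fun a => a.1)
            (fun a b hab => Subtype.ext hab)
      _ = k ^ n := by simp
  have hbddN : BddAbove {c : ℕ | ∃ p : ℝ × ℝ, |p.2| ≤ Rκ ∧ trajCount k θ Eε τε Rκ n ω p = c} := by
    refine ⟨k ^ n, ?_⟩
    rintro c ⟨p, _, rfl⟩
    exact boundT p
  have hbddA : ∀ R : ℝ,
      BddAbove {c : ℕ | ∃ p : ℝ × ℝ, tilACard k θ θinv Eε τε R n ω p = c} := by
    intro R
    refine ⟨k ^ n, ?_⟩
    rintro c ⟨p, rfl⟩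
    exact boundA R p
  constructor
  · -- tilN lo ≤ Ncount
    unfold tilN Ncount
    refine csSup_le ⟨tilACard k θ θinv Eε τε (Rκ - C1) n ω (0, 0), ⟨(0, 0), rfl⟩⟩ ?_
    rintro c ⟨p, rfl⟩
    rcases Nat.eq_zero_or_pos (tilACard k θ θinv Eε τε (Rκ - C1) n ω p) with h0 | hpos
    · rw [h0]
      exact Nat.zero_le _
    · have hfin : Finite {a : Fin (k ^ n) //
          |p.2 - stableS θ θinv Eε τε (θ^[n] ω) (p.1 + ((a : ℕ) : ℝ))|
            ≤ (Rκ - C1) * deriv (fun y => iterG θ Eε n ω y) (p.1 + ((a : ℕ) : ℝ))} :=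
        Subtype.finite
      obtain ⟨⟨a, ha⟩⟩ := (Nat.card_pos_iff.mp hpos).1
      have hp2 : |p.2| ≤ Rκ := by
        have := himp3 p (finFunctionFinEquiv.symm a)
        rw [Equiv.apply_symm_apply] at this
        exact this ha
      calc tilACard k θ θinv Eε τε (Rκ - C1) n ω p
          ≤ trajCount k θ Eε τε Rκ n ω p := card1 p
        _ ≤ _ := le_csSup hbddN ⟨p, hp2, rfl⟩
  · -- Ncount ≤ tilN hi
    unfold tilN Ncount
    refine csSup_le ⟨trajCount k θ Eε τε Rκ n ω (0, 0), ⟨(0, 0), by simp [hRκ0], rfl⟩⟩ ?_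
    rintro c ⟨p, hp2, rfl⟩
    calc trajCount k θ Eε τε Rκ n ω p
        ≤ tilACard k θ θinv Eε τε (Rκ + C1) n ω p := card2 p
      _ ≤ _ := le_csSup (hbddA (Rκ + C1)) ⟨p, rfl⟩

end Counting


end Stmt8Aux

theorem stmt8
    {Ω : Type*} [MeasurableSpace Ω]
    (k : ℕ) (hk : 2 ≤ k)
    (P : Measure Ω) [IsProbabilityMeasure P]
    (θ : Ω → Ω) (hθ : Ergodic θ P) (hθbij : Function.Bijective θ)
    (E τ : ℝ → Ω → ℝ → ℝ) (E₀ τ₀ : ℝ → ℝ)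
    (hE0 : ∀ ω, E 0 ω = E₀) (hτ0 : ∀ ω, τ 0 ω = τ₀)
    (hE₀smooth : ContDiff ℝ (⊤ : ℕ∞) E₀) (hE₀lift : ∀ x, E₀ (x + 1) = E₀ x + k)
    (lam0 : ℝ) (hlam0 : 1 < lam0) (hE₀exp : ∀ x, lam0 ≤ deriv E₀ x)
    (hτ₀smooth : ContDiff ℝ (⊤ : ℕ∞) τ₀) (hτ₀per : Function.Periodic τ₀ 1)
    (hEsmooth : ∀ ε ω, 0 ≤ ε → ContDiff ℝ (⊤ : ℕ∞) (E ε ω))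
    (hElift : ∀ ε ω x, E ε ω (x + 1) = E ε ω x + k)
    (hτsmooth : ∀ ε ω, 0 ≤ ε → ContDiff ℝ (⊤ : ℕ∞) (τ ε ω))
    (hτper : ∀ ε ω, Function.Periodic (τ ε ω) 1)
    (hmeasE : ∀ ε x, Measurable fun ω => E ε ω x)
    (hmeasτ : ∀ ε x, Measurable fun ω => τ ε ω x)
    (ε₀ : ℝ) (hε₀ : 0 < ε₀)
    (hexp : ∀ ε, 0 ≤ ε → ε < ε₀ → ∀ᵐ ω ∂P, ∀ x, (lam0 + 1) / 2 ≤ deriv (E ε ω) x)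
    (hconv : ∀ j : ℕ, ∀ δ : ℝ, 0 < δ → ∃ ε' > 0, ∀ ε, 0 ≤ ε → ε < ε' → ∀ᵐ ω ∂P, ∀ x,
      |iteratedDeriv j (E ε ω) x - iteratedDeriv j E₀ x| < δ ∧
      |iteratedDeriv j (τ ε ω) x - iteratedDeriv j τ₀ x| < δ)
    (θinv : Ω → Ω) (hθinv₁ : Function.LeftInverse θinv θ)
    (hθinv₂ : Function.RightInverse θinv θ) (hθinvmeas : Measurable θinv)
    (Cτ : ℝ) (hCτpos : 0 < Cτ)
    (hCτ : ∀ ε, 0 ≤ ε → ε < ε₀ → ∀ᵐ ω ∂P, ∀ x, |deriv (τ ε ω) x| ≤ Cτ)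
    (κ : ℝ) (hκ : κ = ((lam0 + 1) / 2 + 1) / 2)
    (Rκ : ℝ) (hRκ : Cτ / ((lam0 + 1) / 2 - κ) ≤ Rκ)
 :
    ∀ ε, 0 ≤ ε → ε < ε₀ → ∀ n : ℕ, 1 ≤ n → ∀ᵐ ω ∂P,
      tilN k θ θinv (E ε) (τ ε)
          (Rκ - Cτ * ∑' j : ℕ, (1 / ((lam0 + 1) / 2)) ^ (j + 1)) n ω
        ≤ Ncount k θ (E ε) (τ ε) Rκ n ω ∧
      Ncount k θ (E ε) (τ ε) Rκ n ω
        ≤ tilN k θ θinv (E ε) (τ ε)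
            (Rκ + Cτ * ∑' j : ℕ, (1 / ((lam0 + 1) / 2)) ^ (j + 1)) n ω := by
  intro ε hε hεlt n hn
  set lam : ℝ := (lam0 + 1) / 2 with hlamdef
  have hlam : 1 < lam := by rw [hlamdef]; linarith
  have hr0 : (0 : ℝ) ≤ lam⁻¹ := inv_nonneg.2 (by linarith)
  have hr1 : lam⁻¹ < 1 := inv_lt_one_of_one_lt₀ hlam
  have htsum : ∑' j : ℕ, lam⁻¹ ^ (j + 1) = 1 / (lam - 1) := by
    have hgeo := tsum_geometric_of_lt_one hr0 hr1
    have h2 : ∑' j : ℕ, lam⁻¹ ^ (j + 1) = (∑' j : ℕ, lam⁻¹ ^ j) * lam⁻¹ := by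
      rw [← tsum_mul_right]
      exact tsum_congr fun j => by rw [pow_succ]
    rw [h2, hgeo]
    have hlamne : lam ≠ 0 := by linarith
    have hlam1ne : lam - 1 ≠ 0 := by intro h; apply absurd hlam; intro _; linarith
    field_simp
  have hRge : 2 * (Cτ * ∑' j : ℕ, lam⁻¹ ^ (j + 1)) ≤ Rκ := by
    rw [htsum]
    rw [hκ] at hRκ
    have h1 : (lam0 + 1) / 2 - ((lam0 + 1) / 2 + 1) / 2 = (lam - 1) / 2 := by
      rw [hlamdef]; ring
    rw [h1] at hRκ
    have hlam1 : 0 < lam - 1 := by linarith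
    have h2 : Cτ / ((lam - 1) / 2) = 2 * (Cτ * (1 / (lam - 1))) := by
      field_simp
    linarith [h2 ▸ hRκ]
  have hbase : ∀ᵐ ω ∂P, NiceE k lam (E ε ω) ∧ NiceT Cτ (τ ε ω) := by
    filter_upwards [hexp ε hε hεlt, hCτ ε hε hεlt] with ω h1 h2
    exact ⟨⟨by omega, hlam, (hEsmooth ε ω hε).differentiable (by simp), hElift ε ω,
            fun x => h1 x⟩,
           ⟨(hτsmooth ε ω hε).differentiable (by simp), hτper ε ω, h2⟩⟩
  have hmpθ : MeasurePreserving θ P P := hθ.toMeasurePreserving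
  have hmpinv : MeasurePreserving θinv P P := by
    refine ⟨hθinvmeas, ?_⟩
    refine Measure.ext fun s hs => ?_
    rw [Measure.map_apply hθinvmeas hs]
    have h1 : θ ⁻¹' (θinv ⁻¹' s) = s := by
      ext x; simp [Set.mem_preimage, hθinv₁ x]
    calc P (θinv ⁻¹' s)
        = P (θ ⁻¹' (θinv ⁻¹' s)) :=
          (hmpθ.measure_preimage (hθinvmeas hs).nullMeasurableSet).symm
      _ = P s := by rw [h1]
  have hfwd : ∀ᵐ ω ∂P, ∀ m : ℕ, NiceE k lam (E ε (θ^[m] ω)) ∧ NiceT Cτ (τ ε (θ^[m] ω)) := by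
    rw [MeasureTheory.ae_all_iff]
    intro m
    exact ((hmpθ.iterate m).quasiMeasurePreserving).ae hbase
  have hbwd : ∀ᵐ ω ∂P, ∀ m : ℕ,
      NiceE k lam (E ε (θinv^[m] ω)) ∧ NiceT Cτ (τ ε (θinv^[m] ω)) := by
    rw [MeasureTheory.ae_all_iff]
    intro m
    exact ((hmpinv.iterate m).quasiMeasurePreserving).ae hbase
  filter_upwards [hfwd, hbwd] with ω h1 h2
  have hG : Good2 θ θinv (E ε) (τ ε) k lam Cτ ω := ⟨h1, h2⟩
  have hmain := det_main hθinv₁ hθinv₂ hG n Rκ hRge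
  simp only [one_div]
  exact hmain

end RPE
end
end

section
/- Suppose E₀ is linear (E₀(x) = kx mod 1). If R ≥ π^{−1}(sup_x |τ₀'(x)| + (k−1)R_κ/2), then N_{R_κ}(0;n) ≤ kⁿ φ_R(n) for every n ≥ 1, where φ_R(n) = k^{−n} sup_z sup_{ζ ∈ f₀^{−n}(z)} #{w ∈ f₀^{−n}(z) : w is not transversal to ζ}. -/
open MeasureTheory Filter Topology
open scoped ENNReal

noncomputable section

namespace RPE

variable {Ω : Type*}

/-! ### Auxiliary material for Statement 11 -/

section Aux11

lemma coe_lift01 (z : S1) : ((lift01 z : ℝ) : S1) = z :=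
  (AddCircle.equivIco (1:ℝ) 0).symm_apply_apply z

lemma coe_add_int (r : ℝ) (m : ℤ) : ((r + m : ℝ) : S1) = (r : S1) := by
  rw [QuotientAddGroup.eq_iff_sub_mem]
  simpa using AddSubgroup.zsmul_mem_zmultiples (1:ℝ) m

lemma lift01_coe (r : ℝ) : ∃ m : ℤ, lift01 ((r : ℝ) : S1) = r + m := by
  have h : ((lift01 ((r:ℝ):S1) : ℝ) : S1) = ((r:ℝ) : S1) := coe_lift01 _
  rw [QuotientAddGroup.eq_iff_sub_mem] at h
  obtain ⟨m, hm⟩ := h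
  exact ⟨m, by simp at hm; linarith⟩

lemma per_apply {f : ℝ → ℝ} (hf : Function.Periodic f 1) (r : ℝ) (m : ℤ) :
    f (r + m) = f r := by
  simpa [mul_one] using (hf.int_mul m) r

lemma per_lift01 {f : ℝ → ℝ} (hf : Function.Periodic f 1) (r : ℝ) :
    f (lift01 ((r:ℝ):S1)) = f r := by
  obtain ⟨m, hm⟩ := lift01_coe r
  rw [hm, per_apply hf]

lemma per_deriv {f : ℝ → ℝ} (hf : Function.Periodic f 1) :
    Function.Periodic (deriv f) 1 := by
  intro x
  rw [← deriv_comp_add_const f 1 x]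
  congr 1
  ext y
  exact hf y

lemma invFun_lin {k : ℕ} (hk : 2 ≤ k) (y : ℝ) :
    Function.invFun (fun x : ℝ => (k:ℝ) * x) y = y / k := by
  have hk0 : (k:ℝ) ≠ 0 := by
    have : (0:ℝ) < k := by exact_mod_cast Nat.lt_of_lt_of_le (by norm_num) hk
    linarith
  have hsurj : (fun x : ℝ => (k:ℝ) * x) (y / k) = y := by field_simp
  have h : (k:ℝ) * Function.invFun (fun x : ℝ => (k:ℝ) * x) y = y :=
    Function.invFun_eq (f := fun x : ℝ => (k:ℝ) * x) ⟨y / k, hsurj⟩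
  field_simp
  linarith [h]

lemma deriv_lin {k : ℕ} (x : ℝ) : deriv (fun x : ℝ => (k:ℝ) * x) x = k := by
  rw [deriv_const_mul _ differentiableAt_id, deriv_id'', mul_one]

/-- The slope entry of the iterated Jacobian. -/
private def Bn (k : ℕ) (τ₀ : ℝ → ℝ) : ℕ → S1 → ℝ
  | 0, _ => 0
  | n+1, x => Bn k τ₀ n (circMap (fun t => (k:ℝ) * t) x) * k
      + deriv τ₀ (lift01 x) / (2 * Real.pi)

lemma jacN_eq (k : ℕ) (τ₀ : ℝ → ℝ) (n : ℕ) (x : S1) :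
    jacN k τ₀ n x = !![(k:ℝ)^n, 0; Bn k τ₀ n x, 1] := by
  induction n generalizing x with
  | zero =>
      show (1 : Matrix (Fin 2) (Fin 2) ℝ) = _
      rw [Matrix.one_fin_two]
      norm_num [Bn]
  | succ n ih =>
      show jacN k τ₀ n (circMap (fun t => (k:ℝ) * t) x) * jac1 k τ₀ x = _
      rw [ih, jac1, Matrix.mul_fin_two]
      ext i j
      fin_cases i <;> fin_cases j <;> simp [Bn, pow_succ] <;> ring

lemma circMap_lin {k : ℕ} (r : ℝ) :
    circMap (fun t => (k:ℝ) * t) ((r : ℝ) : S1) = (((k:ℝ) * r : ℝ) : S1) := by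
  obtain ⟨m, hm⟩ := lift01_coe r
  unfold circMap
  rw [hm]
  have h2 : (k:ℝ) * (r + m) = (k:ℝ) * r + ((k * m : ℤ) : ℝ) := by push_cast; ring
  show (((k:ℝ) * (r + (m:ℝ)) : ℝ) : S1) = _
  rw [h2, coe_add_int]

lemma canMap_eq {k : ℕ} (hk : 2 ≤ k) (τ₀ : ℝ → ℝ) (j : ℕ) (p : ℝ × ℝ) :
    canMap (fun x => (k:ℝ) * x) τ₀ j p
      = ((p.1 + j)/k, (k:ℝ) * p.2 + deriv τ₀ ((p.1 + j)/k)) := by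
  unfold canMap
  rw [invFun_lin hk, deriv_lin]

/-- The unperturbed canonical trajectories. -/
private def QT (k : ℕ) (τ₀ : ℝ → ℝ) (n : ℕ) (α : Fin n → ℕ) (p : ℝ × ℝ) : ℝ × ℝ :=
  canTraj (id : Unit → Unit) (fun _ => fun x => (k:ℝ) * x) (fun _ => τ₀) n α () p

lemma traj_spec {k : ℕ} {τ₀ : ℝ → ℝ} (hk : 2 ≤ k) (hper : Function.Periodic τ₀ 1) :
    ∀ (n : ℕ) (α : Fin n → ℕ) (p : ℝ × ℝ),
      (k:ℝ)^n * (QT k τ₀ n α p).1 = p.1 + ∑ i : Fin n, (α i : ℝ) * (k:ℝ)^(i:ℕ) ∧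
      (QT k τ₀ n α p).2 = (k:ℝ)^n * p.2
          + 2 * Real.pi * Bn k τ₀ n (((QT k τ₀ n α p).1 : ℝ) : S1) := by
  have hk0 : (k:ℝ) ≠ 0 := by
    have : (0:ℝ) < k := by exact_mod_cast Nat.lt_of_lt_of_le (by norm_num) hk
    linarith
  have hπ : (0:ℝ) < Real.pi := Real.pi_pos
  intro n
  induction n with
  | zero =>
      intro α p
      constructor
      · simp [QT, canTraj]
      · simp [QT, canTraj, Bn]
  | succ n ih =>
      intro α p
      obtain ⟨ih1, ih2⟩ := ih (fun i => α i.castSucc) p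
      set q := QT k τ₀ n (fun i => α i.castSucc) p with hqdef
      have hstep : QT k τ₀ (n+1) α p
          = canMap (fun x => (k:ℝ) * x) τ₀ (α (Fin.last n)) q := rfl
      rw [hstep, canMap_eq hk]
      set j := α (Fin.last n) with hj
      constructor
      · have h1 : (k:ℝ)^(n+1) * ((q.1 + j)/k) = (k:ℝ)^n * q.1 + (k:ℝ)^n * j := by
          field_simp
          ring
        rw [h1, ih1, Fin.sum_univ_castSucc]
        simp only [Fin.coe_castSucc, Fin.val_last]
        ring
      · have e1 : circMap (fun t => (k:ℝ) * t) ((((q.1 + j)/k : ℝ)) : S1)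
            = ((q.1 : ℝ) : S1) := by
          rw [circMap_lin]
          have h2 : (k:ℝ) * ((q.1 + j)/k) = q.1 + ((j : ℤ) : ℝ) := by
            push_cast
            field_simp
          rw [h2, coe_add_int]
        have e2 : deriv τ₀ (lift01 ((((q.1 + j)/k : ℝ)) : S1)) = deriv τ₀ ((q.1 + j)/k) :=
          per_lift01 (per_deriv hper) _
        show (k:ℝ) * q.2 + deriv τ₀ ((q.1 + j)/k) = _
        rw [show Bn k τ₀ (n+1) ((((q.1 + j)/k : ℝ)) : S1)
            = Bn k τ₀ n (circMap (fun t => (k:ℝ) * t) ((((q.1 + j)/k : ℝ)) : S1)) * k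
              + deriv τ₀ (lift01 ((((q.1 + j)/k : ℝ)) : S1)) / (2 * Real.pi) from rfl,
          e1, e2, ih2]
        field_simp
        ring

/-- Sum along the fiber of the iterated skew product. -/
private def cval (k : ℕ) (τ₀ : ℝ → ℝ) : ℕ → ℝ → ℝ
  | 0, _ => 0
  | n+1, r => τ₀ r / (2 * Real.pi) + cval k τ₀ n ((k:ℝ) * r)

lemma cval_int {k : ℕ} {τ₀ : ℝ → ℝ} (hper : Function.Periodic τ₀ 1) :
    ∀ (n : ℕ) (r : ℝ) (m : ℤ), cval k τ₀ n (r + m) = cval k τ₀ n r := by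
  intro n
  induction n with
  | zero => intro r m; rfl
  | succ n ih =>
      intro r m
      show τ₀ (r + m) / (2 * Real.pi) + cval k τ₀ n ((k:ℝ) * (r + m)) = _
      have h2 : (k:ℝ) * (r + m) = (k:ℝ) * r + ((k * m : ℤ) : ℝ) := by push_cast; ring
      rw [per_apply hper, h2, ih]
      rfl

lemma skew_it {k : ℕ} {τ₀ : ℝ → ℝ} (hper : Function.Periodic τ₀ 1) :
    ∀ (n : ℕ) (r s : ℝ),
      (skewD k τ₀)^[n] (((r : ℝ) : S1), ((s : ℝ) : S1))
        = ((((k:ℝ)^n * r : ℝ) : S1), ((s + cval k τ₀ n r : ℝ) : S1)) := by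
  intro n
  induction n with
  | zero =>
      intro r s
      show (((r:ℝ):S1), ((s:ℝ):S1)) = _
      rw [show (k:ℝ)^0 * r = r by ring, show s + cval k τ₀ 0 r = s from by
        show s + 0 = s; ring]
  | succ n ih =>
      intro r s
      rw [Function.iterate_succ_apply]
      have hstep : skewD k τ₀ (((r:ℝ):S1), ((s:ℝ):S1))
          = ((((k:ℝ) * r : ℝ) : S1), ((s + τ₀ r / (2 * Real.pi) : ℝ) : S1)) := by
        unfold skewD skewMap
        obtain ⟨m, hm⟩ := lift01_coe r
        refine Prod.ext ?_ ?_
        · show (((k:ℝ) * lift01 ((r:ℝ):S1) : ℝ) : S1) = _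
          rw [hm]
          have h2 : (k:ℝ) * (r + m) = (k:ℝ) * r + ((k * m : ℤ) : ℝ) := by push_cast; ring
          rw [h2, coe_add_int]
        · show ((s:ℝ):S1) + ((τ₀ (lift01 ((r:ℝ):S1)) / (2 * Real.pi) : ℝ) : S1) = _
          rw [per_lift01 hper, ← AddCircle.coe_add]
      rw [hstep, ih]
      refine Prod.ext ?_ ?_
      · show ((((k:ℝ)^n * ((k:ℝ) * r) : ℝ)) : S1) = _
        rw [show (k:ℝ)^n * ((k:ℝ) * r) = (k:ℝ)^(n+1) * r by ring]
      · show (((s + τ₀ r / (2 * Real.pi) + cval k τ₀ n ((k:ℝ) * r) : ℝ)) : S1) = _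
        rw [show s + τ₀ r / (2 * Real.pi) + cval k τ₀ n ((k:ℝ) * r)
            = s + cval k τ₀ (n+1) r from by show _ = s + (_ + _); ring]

/-- Preimage parametrization. -/
private def gpre (k : ℕ) (τ₀ : ℝ → ℝ) (z : T2) (n : ℕ) (a : ℕ) : T2 :=
  ((((lift01 z.1 + a) / (k:ℝ)^n : ℝ) : S1),
   (((lift01 z.2 - cval k τ₀ n ((lift01 z.1 + a) / (k:ℝ)^n) : ℝ)) : S1))

lemma cover {k : ℕ} {τ₀ : ℝ → ℝ} (hk : 2 ≤ k) (hper : Function.Periodic τ₀ 1)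
    (n : ℕ) (z w : T2) (hw : (skewD k τ₀)^[n] w = z) :
    ∃ a : Fin (k^n), w = gpre k τ₀ z n a := by
  have hkR : (0:ℝ) < (k:ℝ) := by exact_mod_cast Nat.lt_of_lt_of_le (by norm_num) hk
  have hkp : (0:ℝ) < (k:ℝ)^n := by positivity
  obtain ⟨t, u, rfl⟩ : ∃ t u : ℝ, w = (((t:ℝ):S1), ((u:ℝ):S1)) :=
    ⟨lift01 w.1, lift01 w.2, by rw [coe_lift01, coe_lift01]⟩
  rw [skew_it hper] at hw
  have h1 : ((((k:ℝ)^n * t : ℝ)) : S1) = ((lift01 z.1 : ℝ) : S1) := by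
    rw [coe_lift01]; exact congrArg Prod.fst hw
  have h2 : (((u + cval k τ₀ n t : ℝ)) : S1) = ((lift01 z.2 : ℝ) : S1) := by
    rw [coe_lift01]; exact congrArg Prod.snd hw
  rw [QuotientAddGroup.eq_iff_sub_mem] at h1 h2
  rw [AddSubgroup.mem_zmultiples_iff] at h1 h2
  obtain ⟨m, hm⟩ := h1
  obtain ⟨m2, hm2⟩ := h2
  simp only [zsmul_eq_mul, mul_one] at hm hm2
  have hNpos : (0:ℤ) < (k^n : ℕ) := by positivity
  set a : ℤ := m % (k^n : ℕ) with ha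
  set qz : ℤ := m / (k^n : ℕ) with hqz
  have ha0 : 0 ≤ a := Int.emod_nonneg m (by positivity)
  have haN : a < (k^n : ℕ) := Int.emod_lt_of_pos m hNpos
  have hmdecomp : ((k^n : ℕ) : ℤ) * qz + a = m := Int.mul_ediv_add_emod m _
  have haNat : a.toNat < k^n := by
    omega
  refine ⟨⟨a.toNat, haNat⟩, ?_⟩
  have hacast : ((a.toNat : ℕ) : ℝ) = (a : ℝ) := by
    exact_mod_cast congrArg (fun x : ℤ => (x : ℝ)) (Int.toNat_of_nonneg ha0)
  have ht : t = (lift01 z.1 + (a.toNat : ℕ)) / (k:ℝ)^n + (qz : ℝ) := by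
    have hmr : (k:ℝ)^n * t = lift01 z.1 + (m : ℝ) := by linarith [hm]
    have hcast : ((k^n : ℕ) : ℝ) = (k:ℝ)^n := by push_cast; ring
    have : (m : ℝ) = (k:ℝ)^n * (qz : ℝ) + (a : ℝ) := by
      have := congrArg (fun x : ℤ => (x : ℝ)) hmdecomp
      push_cast at this
      linarith [this]
    rw [hacast]
    field_simp
    nlinarith [hmr, this]
  have hcv : cval k τ₀ n t = cval k τ₀ n ((lift01 z.1 + (a.toNat : ℕ)) / (k:ℝ)^n) := by
    rw [ht]; exact cval_int hper n _ qz
  refine Prod.ext ?_ ?_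
  · show ((t:ℝ):S1) = _
    rw [ht]
    exact coe_add_int _ qz
  · show ((u:ℝ):S1) = _
    have hu : u = (lift01 z.2 - cval k τ₀ n ((lift01 z.1 + (a.toNat : ℕ)) / (k:ℝ)^n))
        + (m2 : ℝ) := by
      rw [← hcv]; linarith [hm2]
    rw [hu]
    exact coe_add_int _ m2

lemma preim_inj {k : ℕ} {τ₀ : ℝ → ℝ} (hk : 2 ≤ k) (hper : Function.Periodic τ₀ 1)
    (n : ℕ) (z : T2) (P : T2 → Prop) :
    ∃ f : {w : T2 // (skewD k τ₀)^[n] w = z ∧ P w} → Fin (k^n), Function.Injective f := by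
  refine ⟨fun w => Classical.choose (cover hk hper n z w.1 w.2.1), ?_⟩
  intro w1 w2 h
  have e1 := Classical.choose_spec (cover hk hper n z w1.1 w1.2.1)
  have e2 := Classical.choose_spec (cover hk hper n z w2.1 w2.2.1)
  refine Subtype.ext ?_
  rw [e1, e2]
  exact congrArg (fun a : Fin (k^n) => gpre k τ₀ z n (a : ℕ)) h

lemma preim_finite {k : ℕ} {τ₀ : ℝ → ℝ} (hk : 2 ≤ k) (hper : Function.Periodic τ₀ 1)
    (n : ℕ) (z : T2) (P : T2 → Prop) :
    Finite {w : T2 // (skewD k τ₀)^[n] w = z ∧ P w} := by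
  obtain ⟨f, hf⟩ := preim_inj hk hper n z P
  exact Finite.of_injective f hf

lemma preim_card {k : ℕ} {τ₀ : ℝ → ℝ} (hk : 2 ≤ k) (hper : Function.Periodic τ₀ 1)
    (n : ℕ) (z : T2) (P : T2 → Prop) :
    Nat.card {w : T2 // (skewD k τ₀)^[n] w = z ∧ P w} ≤ k^n := by
  obtain ⟨f, hf⟩ := preim_inj hk hper n z P
  simpa using Nat.card_le_card_of_injective f hf

lemma not_trans {k : ℕ} {τ₀ : ℝ → ℝ} (hk : 2 ≤ k) {R : ℝ} {n : ℕ} (ζ w : T2)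
    (h : |Bn k τ₀ n ζ.1 - Bn k τ₀ n w.1| ≤ 2 * (R / ((k:ℝ) - 1))) :
    ¬ Transversal k τ₀ R n ζ w := by
  intro hT
  have hkR : (0:ℝ) < (k:ℝ) := by exact_mod_cast Nat.lt_of_lt_of_le (by norm_num) hk
  have hkp : (0:ℝ) < (k:ℝ)^n := by positivity
  set b := Bn k τ₀ n ζ.1 with hb
  set b' := Bn k τ₀ n w.1 with hb'
  have hμ : ∀ (b0 : ℝ) (p : ℝ × ℝ),
      mulVec2 !![(k:ℝ)^n, 0; b0, 1] p = ((k:ℝ)^n * p.1, b0 * p.1 + p.2) := by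
    intro b0 p
    simp [mulVec2]
  have hcone : ∀ c0 : ℝ, |c0| ≤ R / ((k:ℝ) - 1) → ((1:ℝ), c0) ∈ cone (R / ((k:ℝ) - 1)) := by
    intro c0 hc0
    show |c0| ≤ R / ((k:ℝ) - 1) * |(1:ℝ)|
    rwa [abs_one, mul_one]
  have hhalf : |(b' - b)/2| ≤ R / ((k:ℝ) - 1) := by
    rw [abs_div, abs_sub_comm]
    rw [show |(2:ℝ)| = 2 by norm_num]
    linarith [h]
  have hhalf' : |(b - b')/2| ≤ R / ((k:ℝ) - 1) := by
    rw [abs_div]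
    rw [show |(2:ℝ)| = 2 by norm_num]
    linarith [h]
  have hmem : ((k:ℝ)^n, (b + b')/2)
      ∈ mulVec2 (jacN k τ₀ n ζ.1) '' cone (R / ((k:ℝ) - 1)) ∩
        mulVec2 (jacN k τ₀ n w.1) '' cone (R / ((k:ℝ) - 1)) := by
    constructor
    · refine ⟨((1:ℝ), (b' - b)/2), hcone _ hhalf, ?_⟩
      rw [jacN_eq, hμ]
      refine Prod.ext ?_ ?_
      · show (k:ℝ)^n * 1 = (k:ℝ)^n; ring
      · show b * 1 + (b' - b)/2 = (b + b')/2; ring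
    · refine ⟨((1:ℝ), (b - b')/2), hcone _ hhalf', ?_⟩
      rw [jacN_eq, hμ]
      refine Prod.ext ?_ ?_
      · show (k:ℝ)^n * 1 = (k:ℝ)^n; ring
      · show b' * 1 + (b - b')/2 = (b + b')/2; ring
  have h0 := hT hmem
  rw [Set.mem_singleton_iff] at h0
  have := congrArg Prod.fst h0
  simp only at this
  exact absurd this (by positivity)

/-- Base point of the branch `α` issued from `p`. -/
private def ypt (k : ℕ) (n : ℕ) (p : ℝ × ℝ) (α : Fin n → Fin k) : ℝ :=
  (p.1 + ((finFunctionFinEquiv α : ℕ) : ℝ)) / (k:ℝ)^n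

/-- The preimage point associated with the branch `α`. -/
private def wpt (k : ℕ) (τ₀ : ℝ → ℝ) (n : ℕ) (p : ℝ × ℝ) (α : Fin n → Fin k) : T2 :=
  (((ypt k n p α : ℝ) : S1), ((-(cval k τ₀ n (ypt k n p α)) : ℝ) : S1))

lemma ypt_lt {k : ℕ} (hk : 2 ≤ k) (n : ℕ) (α : Fin n → Fin k) :
    ((finFunctionFinEquiv α : ℕ) : ℝ) < (k:ℝ)^n := by
  have := (finFunctionFinEquiv α).isLt
  exact_mod_cast this

lemma ypt_inj {k : ℕ} (hk : 2 ≤ k) (n : ℕ) (p : ℝ × ℝ) (α α' : Fin n → Fin k)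
    (h : ((ypt k n p α : ℝ) : S1) = ((ypt k n p α' : ℝ) : S1)) : α = α' := by
  have hkR : (0:ℝ) < (k:ℝ) := by exact_mod_cast Nat.lt_of_lt_of_le (by norm_num) hk
  have hkp : (0:ℝ) < (k:ℝ)^n := by positivity
  rw [QuotientAddGroup.eq_iff_sub_mem, AddSubgroup.mem_zmultiples_iff] at h
  obtain ⟨m, hm⟩ := h
  simp only [zsmul_eq_mul, mul_one] at hm
  have hd : ypt k n p α - ypt k n p α'
      = (((finFunctionFinEquiv α : ℕ) : ℝ) - ((finFunctionFinEquiv α' : ℕ) : ℝ)) / (k:ℝ)^n := by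
    unfold ypt
    ring
  have l1 := ypt_lt hk n α
  have l2 := ypt_lt hk n α'
  have n1 : (0:ℝ) ≤ ((finFunctionFinEquiv α : ℕ) : ℝ) := Nat.cast_nonneg _
  have n2 : (0:ℝ) ≤ ((finFunctionFinEquiv α' : ℕ) : ℝ) := Nat.cast_nonneg _
  have habs : |(m:ℝ)| < 1 := by
    rw [hm, hd, abs_div, abs_of_pos hkp, div_lt_one hkp, abs_lt]
    constructor <;> nlinarith
  have hm0 : m = 0 := by
    by_contra h0
    have h1 : (1:ℤ) ≤ |m| := Int.one_le_abs (by omega)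
    have h2 : (1:ℝ) ≤ |(m:ℝ)| := by
      have : ((|m| : ℤ) : ℝ) = |(m:ℝ)| := by push_cast; ring
      rw [← this]
      exact_mod_cast h1
    linarith
  rw [hm0] at hm
  simp only [Int.cast_zero] at hm
  have hAA : ((finFunctionFinEquiv α : ℕ) : ℝ) = ((finFunctionFinEquiv α' : ℕ) : ℝ) := by
    have h3 : ypt k n p α = ypt k n p α' := by linarith
    rw [h3] at hd
    have h4 : (((finFunctionFinEquiv α : ℕ) : ℝ) - ((finFunctionFinEquiv α' : ℕ) : ℝ)) / (k:ℝ)^n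
        = 0 := by linarith [hd]
    have h5 := (div_eq_zero_iff.mp h4).resolve_right (ne_of_gt hkp)
    linarith
  have : (finFunctionFinEquiv α : ℕ) = (finFunctionFinEquiv α' : ℕ) := by exact_mod_cast hAA
  exact finFunctionFinEquiv.injective (Fin.val_injective this)

lemma QT_fst {k : ℕ} {τ₀ : ℝ → ℝ} (hk : 2 ≤ k) (hper : Function.Periodic τ₀ 1)
    (n : ℕ) (p : ℝ × ℝ) (α : Fin n → Fin k) :
    (QT k τ₀ n (fun i => (α i : ℕ)) p).1 = ypt k n p α := by
  have hkR : (0:ℝ) < (k:ℝ) := by exact_mod_cast Nat.lt_of_lt_of_le (by norm_num) hk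
  have hkp : (0:ℝ) < (k:ℝ)^n := by positivity
  have h := (traj_spec hk hper n (fun i => (α i : ℕ)) p).1
  have hc : (∑ i : Fin n, (((α i : ℕ)) : ℝ) * (k:ℝ)^(i:ℕ))
      = ((finFunctionFinEquiv α : ℕ) : ℝ) := by
    rw [finFunctionFinEquiv_apply]
    push_cast
    ring
  rw [hc] at h
  unfold ypt
  rw [eq_div_iff (ne_of_gt hkp)]
  linear_combination h

lemma QT_snd {k : ℕ} {τ₀ : ℝ → ℝ} (hk : 2 ≤ k) (hper : Function.Periodic τ₀ 1)
    (n : ℕ) (p : ℝ × ℝ) (α : Fin n → Fin k) :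
    2 * Real.pi * Bn k τ₀ n ((ypt k n p α : ℝ) : S1)
      = (QT k τ₀ n (fun i => (α i : ℕ)) p).2 - (k:ℝ)^n * p.2 := by
  have h := (traj_spec hk hper n (fun i => (α i : ℕ)) p).2
  rw [QT_fst hk hper n p α] at h
  linarith [h]

lemma wpt_iter {k : ℕ} {τ₀ : ℝ → ℝ} (hk : 2 ≤ k) (hper : Function.Periodic τ₀ 1)
    (n : ℕ) (p : ℝ × ℝ) (α : Fin n → Fin k) :
    (skewD k τ₀)^[n] (wpt k τ₀ n p α) = (((p.1 : ℝ) : S1), (((0:ℝ)) : S1)) := by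
  have hkR : (0:ℝ) < (k:ℝ) := by exact_mod_cast Nat.lt_of_lt_of_le (by norm_num) hk
  have hkp : (0:ℝ) < (k:ℝ)^n := by positivity
  unfold wpt
  rw [skew_it hper]
  have h1 : (k:ℝ)^n * ypt k n p α = p.1 + (((finFunctionFinEquiv α : ℕ) : ℤ) : ℝ) := by
    unfold ypt
    push_cast
    field_simp
  rw [h1, coe_add_int]
  have h2 : -(cval k τ₀ n (ypt k n p α)) + cval k τ₀ n (ypt k n p α) = (0:ℝ) := by ring
  rw [h2]

end Aux11

theorem stmt11
    (k : ℕ) (hk : 2 ≤ k) (τ₀ : ℝ → ℝ)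
    (hτ₀smooth : ContDiff ℝ (⊤ : ℕ∞) τ₀) (hτ₀per : Function.Periodic τ₀ 1)
    (Cτ : ℝ) (hCτ : ∀ x, |deriv τ₀ x| ≤ Cτ)
    (Rκ : ℝ) (hRκ : Cτ / (((k : ℝ) + 1) / 2 - ((((k : ℝ) + 1) / 2) + 1) / 2) ≤ Rκ)
    (R : ℝ)
    (hR : ((⨆ x : ℝ, |deriv τ₀ x|) + ((k : ℝ) - 1) * Rκ / 2) / Real.pi ≤ R) :
    ∀ n : ℕ, 1 ≤ n →
      (NcountD k (fun x => (k : ℝ) * x) τ₀ Rκ n : ℝ) ≤ (k : ℝ) ^ n * phiR k τ₀ R n := by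
  intro n _hn
  have hk2 : (2:ℝ) ≤ (k:ℝ) := by exact_mod_cast hk
  have hk0 : (k:ℝ) ≠ 0 := by linarith
  have hkp : (0:ℝ) < (k:ℝ)^n := by positivity
  have hπ : (0:ℝ) < Real.pi := Real.pi_pos
  have hRR : Rκ / (2 * Real.pi) ≤ R / ((k:ℝ) - 1) := by
    have hs : (0:ℝ) ≤ ⨆ x : ℝ, |deriv τ₀ x| := Real.iSup_nonneg (fun x => abs_nonneg _)
    have h1 : ((⨆ x : ℝ, |deriv τ₀ x|) + ((k:ℝ) - 1) * Rκ / 2) ≤ R * Real.pi :=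
      (div_le_iff₀ hπ).mp hR
    rw [div_le_div_iff₀ (by linarith) (by linarith)]
    nlinarith
  have main : NcountD k (fun x => (k : ℝ) * x) τ₀ Rκ n ≤ phiCount k τ₀ R n := by
    apply csSup_le'
    rintro c ⟨p, hp, rfl⟩
    show Nat.card {α : Fin n → Fin k // |(QT k τ₀ n (fun i => (α i : ℕ)) p).2| ≤ Rκ}
        ≤ phiCount k τ₀ R n
    by_cases hne :
        Nonempty {α : Fin n → Fin k // |(QT k τ₀ n (fun i => (α i : ℕ)) p).2| ≤ Rκ}
    · obtain ⟨⟨β, hβ⟩⟩ := hne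
      set z : T2 := (((p.1 : ℝ) : S1), (((0:ℝ)) : S1)) with hz
      set ζ : T2 := wpt k τ₀ n p β with hζ
      have hζit : (skewD k τ₀)^[n] ζ = z := wpt_iter hk hτ₀per n p β
      -- non-transversality of trapped branches
      have hnt : ∀ α : Fin n → Fin k, |(QT k τ₀ n (fun i => (α i : ℕ)) p).2| ≤ Rκ →
          ¬ Transversal k τ₀ R n ζ (wpt k τ₀ n p α) := by
        intro α hα
        apply not_trans hk
        have e1 := QT_snd hk hτ₀per n p β
        have e2 := QT_snd hk hτ₀per n p α
        have hζ1 : Bn k τ₀ n ζ.1 = Bn k τ₀ n ((ypt k n p β : ℝ) : S1) := rfl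
        have hw1 : Bn k τ₀ n (wpt k τ₀ n p α).1 = Bn k τ₀ n ((ypt k n p α : ℝ) : S1) := rfl
        rw [hζ1, hw1]
        have hβ' := abs_le.mp hβ
        have hα' := abs_le.mp hα
        have h2π : (0:ℝ) < 2 * Real.pi := by linarith
        have hD : Bn k τ₀ n ((ypt k n p β : ℝ) : S1) - Bn k τ₀ n ((ypt k n p α : ℝ) : S1)
            = ((QT k τ₀ n (fun i => (β i : ℕ)) p).2
                - (QT k τ₀ n (fun i => (α i : ℕ)) p).2) / (2 * Real.pi) := by
          rw [eq_div_iff (ne_of_gt h2π)]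
          linarith [e1, e2]
        have hmul : Rκ ≤ R / ((k:ℝ) - 1) * (2 * Real.pi) := by
          have := mul_le_mul_of_nonneg_right hRR (le_of_lt h2π)
          rwa [div_mul_cancel₀ _ (ne_of_gt h2π)] at this
        rw [abs_le]
        constructor
        · rw [hD, le_div_iff₀ h2π]
          linarith
        · rw [hD, div_le_iff₀ h2π]
          linarith
      -- the injection into non-transversal preimages
      haveI hfin : Finite {w : T2 // (skewD k τ₀)^[n] w = z ∧ ¬ Transversal k τ₀ R n ζ w} :=
        preim_finite hk hτ₀per n z _
      have hcard : Nat.card {α : Fin n → Fin k // |(QT k τ₀ n (fun i => (α i : ℕ)) p).2| ≤ Rκ}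
          ≤ Nat.card {w : T2 // (skewD k τ₀)^[n] w = z ∧ ¬ Transversal k τ₀ R n ζ w} := by
        apply Nat.card_le_card_of_injective
          (fun α => ⟨wpt k τ₀ n p α.1, wpt_iter hk hτ₀per n p α.1, hnt α.1 α.2⟩)
        intro α1 α2 h12
        have h' : wpt k τ₀ n p α1.1 = wpt k τ₀ n p α2.1 := congrArg Subtype.val h12
        have hc : ((ypt k n p α1.1 : ℝ) : S1) = ((ypt k n p α2.1 : ℝ) : S1) :=
          congrArg Prod.fst h'
        exact Subtype.ext (ypt_inj hk n p α1.1 α2.1 hc)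
      refine hcard.trans ?_
      have hmem : Nat.card {w : T2 // (skewD k τ₀)^[n] w = z ∧ ¬ Transversal k τ₀ R n ζ w}
          ∈ {c : ℕ | ∃ z' ζ' : T2, (skewD k τ₀)^[n] ζ' = z' ∧ notTransCount k τ₀ R n z' ζ' = c} :=
        ⟨z, ζ, hζit, rfl⟩
      have hbdd : BddAbove
          {c : ℕ | ∃ z' ζ' : T2, (skewD k τ₀)^[n] ζ' = z' ∧ notTransCount k τ₀ R n z' ζ' = c} := by
        refine ⟨k^n, ?_⟩
        rintro c ⟨z', ζ', _, rfl⟩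
        exact preim_card hk hτ₀per n z' _
      exact le_csSup hbdd hmem
    · haveI := not_nonempty_iff.mp hne
      rw [Nat.card_of_isEmpty]
      exact Nat.zero_le _
  have hphi : (k:ℝ)^n * phiR k τ₀ R n = (phiCount k τ₀ R n : ℝ) := by
    unfold phiR
    field_simp
  rw [hphi]
  exact_mod_cast main

end RPE
end
end
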